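/- arXiv:2602.22504 — 5 statements merged into one kernel-verified Lean document; each statement's English description precedes it below -/
import Mathlib

section
/- Let α×β = (a_0,…,a_k)×(b_1,…,b_k) and α'×β' = (a'_0,…,a'_k)×(b'_1,…,b'_k) be special B/C-bipartitions of n and n' respectively. Let J = {1 ≤ i ≤ k : b_i = a_i+1 and b'_i = a'_i+1}. Define c_0 = a_0+a'_0 and, for 1 ≤ i ≤ k, (c_i, d_i) = (a_i+a'_i+1, b_i+b'_i−1) if i ∈ J and (c_i, d_i) = (a_i+a'_i, b_i+b'_i) otherwise. Then (c_0,…,c_k)×(d_1,…,d_k) is a special B/C-bipartition of n+n' (in particular the c-tuple and the d-tuple are weakly increasing), its symbol-entry multiset equals the symbol-entry multiset of (α+α')×(β+β'), and it is the unique special B/C-bipartition with parameter k having that symbol-entry multiset. -/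
/-- A B/C-bipartition of `n` with parameter `k ≥ 1`: `a = (a₀,…,a_k)`, `b = (b₁,…,b_k)`
weakly increasing, with total sum `n`.  We encode `a b : ℕ → ℕ`, only indices `≤ k`
matter, and we fix the convention `b 0 = 0`. -/
def IsBip (k n : ℕ) (a b : ℕ → ℕ) : Prop :=
  1 ≤ k ∧ b 0 = 0 ∧ (∀ i, i < k → a i ≤ a (i+1)) ∧
    (∀ i, 1 ≤ i → i < k → b i ≤ b (i+1)) ∧
    (∑ i ∈ Finset.range (k+1), a i) + (∑ i ∈ Finset.Icc 1 k, b i) = n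

/-- The order on B/C-bipartitions: for all `0 ≤ i ≤ k`,
`Σ_{j=i}^k (a_j+b_j) ≤ Σ_{j=i}^k (p_j+q_j)` and
`Σ_{j=i}^k a_j + Σ_{j=i+1}^k b_j ≤ Σ_{j=i}^k p_j + Σ_{j=i+1}^k q_j`
(convention `b 0 = q 0 = 0`). -/
def BipLE (k : ℕ) (a b p q : ℕ → ℕ) : Prop :=
  ∀ i, i ≤ k →
    ((∑ j ∈ Finset.Icc i k, (a j + b j)) ≤ ∑ j ∈ Finset.Icc i k, (p j + q j)) ∧
    ((∑ j ∈ Finset.Icc i k, a j) + ∑ j ∈ Finset.Icc (i+1) k, b j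
      ≤ (∑ j ∈ Finset.Icc i k, p j) + ∑ j ∈ Finset.Icc (i+1) k, q j)

/-- The symbol-entry multiset of a B/C-bipartition:
`{a_i + i : 0 ≤ i ≤ k} ∪ {b_i + (i−1) : 1 ≤ i ≤ k}`. -/
def symbolMS (k : ℕ) (a b : ℕ → ℕ) : Multiset ℕ :=
  (Finset.range (k+1)).val.map (fun i => a i + i)
    + (Finset.Icc 1 k).val.map (fun i => b i + (i - 1))

/-- Special B/C-bipartition: `a_{i−1} ≤ b_i ≤ a_i + 1` for all `1 ≤ i ≤ k`. -/
def IsSpecialBip (k : ℕ) (a b : ℕ → ℕ) : Prop :=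
  ∀ i, 1 ≤ i → i ≤ k → a (i-1) ≤ b i ∧ b i ≤ a i + 1

/-- The `c`-tuple of Statement 10: `c₀ = a₀+a'₀` and, for `i ≥ 1`,
`c_i = a_i+a'_i+1` if `i ∈ J` (i.e. `b_i = a_i+1` and `b'_i = a'_i+1`), else `a_i+a'_i`. -/
def mergeC (a b a' b' : ℕ → ℕ) : ℕ → ℕ := fun i =>
  if i ≠ 0 ∧ b i = a i + 1 ∧ b' i = a' i + 1 then a i + a' i + 1 else a i + a' i

/-- The `d`-tuple of Statement 10: for `i ≥ 1`,
`d_i = b_i+b'_i−1` if `i ∈ J`, else `b_i+b'_i` (and `d₀ = 0`). -/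
def mergeD (a b a' b' : ℕ → ℕ) : ℕ → ℕ := fun i =>
  if i ≠ 0 ∧ b i = a i + 1 ∧ b' i = a' i + 1 then b i + b' i - 1 else b i + b' i

section Aux

lemma range_succ_eq_insert (k : ℕ) : Finset.range (k+1) = insert 0 (Finset.Icc 1 k) := by
  ext i; simp only [Finset.mem_range, Finset.mem_insert, Finset.mem_Icc]; omega

lemma val_map_eq_sum (s : Finset ℕ) (f : ℕ → ℕ) :
    s.val.map f = ∑ i ∈ s, ({f i} : Multiset ℕ) := by
  rw [Finset.sum, show (fun i => ({f i} : Multiset ℕ)) = (fun x => ({x} : Multiset ℕ)) ∘ f from rfl,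
    ← Multiset.map_map, Multiset.sum_map_singleton]

lemma icc_val_map (k : ℕ) (f : ℕ → ℕ) :
    (Finset.Icc 1 k).val.map f = (Multiset.range k).map (fun i => f (i+1)) := by
  induction k with
  | zero => simp
  | succ k ih =>
    rw [show Finset.Icc 1 (k+1) = insert (k+1) (Finset.Icc 1 k) from by
        ext i; simp only [Finset.mem_insert, Finset.mem_Icc]; omega,
      Finset.insert_val_of_notMem (by simp), Multiset.range_succ,
      Multiset.map_cons, Multiset.map_cons, ih]

/-- The interleaving function: entries of the symbol in sorted order. -/
def ilf (a b : ℕ → ℕ) : ℕ → ℕ := fun j =>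
  if j % 2 = 0 then a (j/2) + j/2 else b (j/2 + 1) + j/2

lemma ilf_even (a b : ℕ → ℕ) (i : ℕ) : ilf a b (2*i) = a i + i := by
  have h1 : (2*i) % 2 = 0 := by omega
  have h2 : (2*i) / 2 = i := by omega
  simp [ilf, h1, h2]

lemma ilf_odd (a b : ℕ → ℕ) (i : ℕ) : ilf a b (2*i+1) = b (i+1) + i := by
  have h1 : (2*i+1) % 2 = 1 := by omega
  have h2 : (2*i+1) / 2 = i := by omega
  simp [ilf, h1, h2]

lemma map_ilf (k : ℕ) (a b : ℕ → ℕ) :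
    Multiset.map (ilf a b) (Multiset.range (2*k+1))
      = Multiset.map (fun i => a i + i) (Multiset.range (k+1))
        + Multiset.map (fun i => b (i+1) + i) (Multiset.range k) := by
  induction k with
  | zero =>
    have h0 := ilf_even a b 0
    simp only [Nat.mul_zero] at h0
    simp [Multiset.range_succ, h0]
  | succ k ih =>
    have hA : Multiset.map (fun i => a i + i) (Multiset.range (k+1+1))
        = (a (k+1) + (k+1)) ::ₘ Multiset.map (fun i => a i + i) (Multiset.range (k+1)) := by
      rw [Multiset.range_succ, Multiset.map_cons]
    have hB : Multiset.map (fun i => b (i+1) + i) (Multiset.range (k+1))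
        = (b (k+1) + k) ::ₘ Multiset.map (fun i => b (i+1) + i) (Multiset.range k) := by
      rw [Multiset.range_succ, Multiset.map_cons]
    have hL : Multiset.map (ilf a b) (Multiset.range (2*(k+1)+1))
        = ilf a b (2*(k+1)) ::ₘ ilf a b (2*k+1) ::ₘ Multiset.map (ilf a b) (Multiset.range (2*k+1)) := by
      rw [show 2*(k+1)+1 = (2*k+1+1)+1 from by ring, Multiset.range_succ, Multiset.range_succ,
        Multiset.map_cons, Multiset.map_cons, show 2*k+1+1 = 2*(k+1) from by ring]
    rw [hL, hA, hB, ih, ilf_even, ilf_odd, Multiset.cons_add, Multiset.add_cons]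

lemma symbolMS_eq_il (k : ℕ) (a b : ℕ → ℕ) :
    symbolMS k a b = (((List.range (2*k+1)).map (ilf a b) : List ℕ) : Multiset ℕ) := by
  rw [symbolMS, ← Multiset.map_coe, show ((List.range (2*k+1) : List ℕ) : Multiset ℕ)
      = Multiset.range (2*k+1) from rfl, map_ilf, Finset.range_val, icc_val_map]
  simp

lemma il_sorted (k : ℕ) (a b : ℕ → ℕ) (hs : IsSpecialBip k a b) :
    List.Pairwise (· ≤ ·) ((List.range (2*k+1)).map (ilf a b)) := by
  rw [← List.isChain_iff_pairwise, List.isChain_map]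
  rw [show 2*k+1 = (2*k).succ from rfl, List.isChain_range_succ]
  intro m hm
  rcases Nat.even_or_odd m with ⟨i, hi⟩ | ⟨i, hi⟩
  · have hm2 : m = 2*i := by omega
    subst hm2
    rw [ilf_even]
    show a i + i ≤ ilf a b (2*i+1)
    rw [ilf_odd]
    have h := (hs (i+1) (by omega) (by omega)).1
    simp only [Nat.add_sub_cancel] at h
    omega
  · have hm2 : m = 2*i+1 := by omega
    subst hm2
    rw [ilf_odd]
    show b (i+1) + i ≤ ilf a b (2*i+1+1)
    rw [show 2*i+1+1 = 2*(i+1) from by ring, ilf_even]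
    have h := (hs (i+1) (by omega) (by omega)).2
    omega

lemma list_map_range_inj {f g : ℕ → ℕ} {n : ℕ}
    (h : (List.range n).map f = (List.range n).map g) : ∀ j < n, f j = g j := by
  intro j hj
  exact List.map_eq_map_iff.mp h j (List.mem_range.mpr hj)

lemma special_unique (k : ℕ) (a b c d : ℕ → ℕ)
    (h1 : IsSpecialBip k a b) (h2 : IsSpecialBip k c d)
    (h : symbolMS k a b = symbolMS k c d) :
    (∀ i, i ≤ k → a i = c i) ∧ (∀ i, 1 ≤ i → i ≤ k → b i = d i) := by
  rw [symbolMS_eq_il, symbolMS_eq_il, Multiset.coe_eq_coe] at h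
  have heq := List.Perm.eq_of_pairwise' (il_sorted k a b h1) (il_sorted k c d h2) h
  have hptw := list_map_range_inj heq
  constructor
  · intro i hi
    have := hptw (2*i) (by omega)
    rw [ilf_even, ilf_even] at this
    omega
  · intro i h1i hik
    have := hptw (2*(i-1)+1) (by omega)
    rw [ilf_odd, ilf_odd, show i - 1 + 1 = i from by omega] at this
    omega

end Aux


lemma symbolMS_eq_sum2 (k : ℕ) (a b : ℕ → ℕ) :
    symbolMS k a b = ({a 0} : Multiset ℕ)
      + ∑ i ∈ Finset.Icc 1 k, (({a i + i} : Multiset ℕ) + {b i + (i-1)}) := by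
  rw [symbolMS, val_map_eq_sum, val_map_eq_sum, range_succ_eq_insert,
    Finset.sum_insert (by simp), Finset.sum_add_distrib]
  simp [add_assoc]

/-- For special B/C-bipartitions `α×β` of `n` and `α'×β'` of `n'`, the
pair `(c,d)` defined via the set `J = {i : b_i = a_i+1 ∧ b'_i = a'_i+1}` is a special
B/C-bipartition of `n+n'`, its symbol-entry multiset equals that of `(α+α')×(β+β')`,
and it is the unique special B/C-bipartition with parameter `k` having that
symbol-entry multiset. -/
theorem stmt10 (k n n' : ℕ) (a b a' b' : ℕ → ℕ)
    (h1 : IsBip k n a b) (h1s : IsSpecialBip k a b)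
    (h2 : IsBip k n' a' b') (h2s : IsSpecialBip k a' b') :
    IsBip k (n+n') (mergeC a b a' b') (mergeD a b a' b') ∧
    IsSpecialBip k (mergeC a b a' b') (mergeD a b a' b') ∧
    symbolMS k (mergeC a b a' b') (mergeD a b a' b')
      = symbolMS k (fun i => a i + a' i) (fun i => b i + b' i) ∧
    ∀ c' d' : ℕ → ℕ, IsBip k (n+n') c' d' → IsSpecialBip k c' d' →
      symbolMS k c' d' = symbolMS k (mergeC a b a' b') (mergeD a b a' b') →
      (∀ i, i ≤ k → c' i = mergeC a b a' b' i) ∧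
      (∀ i, 1 ≤ i → i ≤ k → d' i = mergeD a b a' b' i) := by
  obtain ⟨hk, hb0, hamono, hbmono, hsum⟩ := h1
  obtain ⟨hk', hb0', ha'mono, hb'mono, hsum'⟩ := h2
  have hCmono : ∀ i, i < k → mergeC a b a' b' i ≤ mergeC a b a' b' (i+1) := by
    intro i hik
    have hsp := h1s (i+1) (by omega) (by omega)
    have hsp' := h2s (i+1) (by omega) (by omega)
    simp only [Nat.add_sub_cancel] at hsp hsp'
    have h5 := hamono i hik
    have h6 := ha'mono i hik
    simp only [mergeC]
    by_cases hJ1 : i ≠ 0 ∧ b i = a i + 1 ∧ b' i = a' i + 1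
    · by_cases hJ2 : i+1 ≠ 0 ∧ b (i+1) = a (i+1) + 1 ∧ b' (i+1) = a' (i+1) + 1
      · rw [if_pos hJ1, if_pos hJ2]; omega
      · rw [if_pos hJ1, if_neg hJ2]
        obtain ⟨hne, hb, hb'⟩ := hJ1
        have hcase : b (i+1) ≤ a (i+1) ∨ b' (i+1) ≤ a' (i+1) := by
          by_contra hc
          push_neg at hc
          exact hJ2 ⟨by omega, by omega, by omega⟩
        have h3 := hbmono i (by omega) hik
        have h4 := hb'mono i (by omega) hik
        rcases hcase with h | h <;> omega
    · rw [if_neg hJ1]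
      by_cases hJ2 : i+1 ≠ 0 ∧ b (i+1) = a (i+1) + 1 ∧ b' (i+1) = a' (i+1) + 1
      · rw [if_pos hJ2]; omega
      · rw [if_neg hJ2]; omega
  have hDmono : ∀ i, 1 ≤ i → i < k → mergeD a b a' b' i ≤ mergeD a b a' b' (i+1) := by
    intro i h1i hik
    have hsp := h1s i h1i (by omega)
    have hsp' := h2s i h1i (by omega)
    have h3 := hbmono i h1i hik
    have h4 := hb'mono i h1i hik
    have h5 := hamono i hik
    have h6 := ha'mono i hik
    simp only [mergeD]
    by_cases hJ2 : i+1 ≠ 0 ∧ b (i+1) = a (i+1) + 1 ∧ b' (i+1) = a' (i+1) + 1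
    · rw [if_pos hJ2]
      by_cases hJ1 : i ≠ 0 ∧ b i = a i + 1 ∧ b' i = a' i + 1
      · rw [if_pos hJ1]; omega
      · rw [if_neg hJ1]
        have hcase : b i ≤ a i ∨ b' i ≤ a' i := by
          by_contra hc; push_neg at hc
          exact hJ1 ⟨by omega, by omega, by omega⟩
        rcases hcase with h | h <;> omega
    · rw [if_neg hJ2]
      by_cases hJ1 : i ≠ 0 ∧ b i = a i + 1 ∧ b' i = a' i + 1
      · rw [if_pos hJ1]; omega
      · rw [if_neg hJ1]; omega
  have hspec : IsSpecialBip k (mergeC a b a' b') (mergeD a b a' b') := by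
    intro i h1i hik
    obtain ⟨m, rfl⟩ : ∃ m, i = m + 1 := ⟨i - 1, by omega⟩
    simp only [Nat.add_sub_cancel]
    have hsp := h1s (m+1) (by omega) hik
    have hsp' := h2s (m+1) (by omega) hik
    simp only [Nat.add_sub_cancel] at hsp hsp'
    have h5 := hamono m (by omega)
    have h6 := ha'mono m (by omega)
    simp only [mergeC, mergeD]
    by_cases hJ2 : m+1 ≠ 0 ∧ b (m+1) = a (m+1) + 1 ∧ b' (m+1) = a' (m+1) + 1
    · rw [if_pos hJ2, if_pos hJ2]
      by_cases hJ1 : m ≠ 0 ∧ b m = a m + 1 ∧ b' m = a' m + 1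
      · rw [if_pos hJ1]
        have h7 := hbmono m (by omega) (by omega)
        have h8 := hb'mono m (by omega) (by omega)
        omega
      · rw [if_neg hJ1]; omega
    · rw [if_neg hJ2, if_neg hJ2]
      have hcase : b (m+1) ≤ a (m+1) ∨ b' (m+1) ≤ a' (m+1) := by
        by_contra hc; push_neg at hc
        exact hJ2 ⟨by omega, by omega, by omega⟩
      by_cases hJ1 : m ≠ 0 ∧ b m = a m + 1 ∧ b' m = a' m + 1
      · rw [if_pos hJ1]
        have h7 := hbmono m (by omega) (by omega)
        have h8 := hb'mono m (by omega) (by omega)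
        rcases hcase with h | h <;> omega
      · rw [if_neg hJ1]
        rcases hcase with h | h <;> omega
  have hC0 : mergeC a b a' b' 0 = a 0 + a' 0 := by simp [mergeC]
  have hD0 : mergeD a b a' b' 0 = 0 := by simp [mergeD, hb0, hb0']
  have hsumC : (∑ i ∈ Finset.range (k+1), mergeC a b a' b' i)
      + (∑ i ∈ Finset.Icc 1 k, mergeD a b a' b' i) = n + n' := by
    rw [range_succ_eq_insert, Finset.sum_insert (by simp)]
    rw [range_succ_eq_insert, Finset.sum_insert (by simp)] at hsum hsum'
    have hcd : ∀ i ∈ Finset.Icc 1 k, mergeC a b a' b' i + mergeD a b a' b' i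
        = (a i + a' i) + (b i + b' i) := by
      intro i hi
      simp only [Finset.mem_Icc] at hi
      have hsp := h1s i hi.1 hi.2
      have hsp' := h2s i hi.1 hi.2
      simp only [mergeC, mergeD]
      by_cases hJ : i ≠ 0 ∧ b i = a i + 1 ∧ b' i = a' i + 1
      · rw [if_pos hJ, if_pos hJ]; omega
      · rw [if_neg hJ, if_neg hJ]
    have hsplit : (∑ i ∈ Finset.Icc 1 k, mergeC a b a' b' i)
          + (∑ i ∈ Finset.Icc 1 k, mergeD a b a' b' i)
        = (∑ i ∈ Finset.Icc 1 k, a i) + (∑ i ∈ Finset.Icc 1 k, a' i)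
          + ((∑ i ∈ Finset.Icc 1 k, b i) + (∑ i ∈ Finset.Icc 1 k, b' i)) := by
      rw [← Finset.sum_add_distrib, ← Finset.sum_add_distrib, ← Finset.sum_add_distrib,
        ← Finset.sum_add_distrib]
      exact Finset.sum_congr rfl hcd
    omega
  have hms : symbolMS k (mergeC a b a' b') (mergeD a b a' b')
      = symbolMS k (fun i => a i + a' i) (fun i => b i + b' i) := by
    rw [symbolMS_eq_sum2, symbolMS_eq_sum2, hC0]
    congr 1
    apply Finset.sum_congr rfl
    intro i hi
    simp only [Finset.mem_Icc] at hi
    simp only [mergeC, mergeD]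
    by_cases hJ : i ≠ 0 ∧ b i = a i + 1 ∧ b' i = a' i + 1
    · rw [if_pos hJ, if_pos hJ]
      obtain ⟨hne, hb, hb'⟩ := hJ
      rw [show a i + a' i + 1 + i = b i + b' i + (i-1) from by omega,
        show b i + b' i - 1 + (i-1) = a i + a' i + i from by omega,
        add_comm]
    · rw [if_neg hJ, if_neg hJ]
  refine ⟨⟨hk, hD0, hCmono, hDmono, hsumC⟩, hspec, hms, ?_⟩
  intro c' d' _ hspec' hmseq
  exact special_unique k c' d' _ _ hspec' hspec hmseq
end

section
/- Let l ≥ 1 be odd and a_1, a_2 ≥ 1 be odd. For i ∈ {1,2} let λ_i be the partition consisting of l copies of a_i, a special orthogonal partition of d_i = a_i·l. Let W = W(λ_1,λ_2) be the Waldspurger sequence for the type B data with d = d_1+d_2−1. Then W consists of l−1 copies of a_1+a_2 followed by one copy of a_1+a_2−1, and if ν is a C-collapse of (W^t)^−, ν_1 is a C-collapse of (λ_1^t)^−, and ν_2 is a C-collapse of (λ_2^t)^−, then ν = ν_1 ∪ ν_2. -/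
/-- `f` is a partition of `d`: weakly decreasing, finitely many nonzero terms, total sum `d`.
    Indexing is 0-based: `f j` is the `(j+1)`-st part. -/
def IsPartitionOf (f : ℕ → ℕ) (d : ℕ) : Prop :=
  Antitone f ∧ ∃ N, (∀ j, N ≤ j → f j = 0) ∧ ∑ j ∈ Finset.range N, f j = d

/-- Transpose of a partition (0-based): `ptrans f k` = #{j : f j ≥ k+1}, i.e. `(f^t)_{k+1}`. -/
noncomputable def ptrans (f : ℕ → ℕ) : ℕ → ℕ := fun k => Nat.card {j : ℕ // k + 1 ≤ f j}

/-- Multiplicity of the part `k` in `f` (meaningful for `k > 0`). -/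
noncomputable def pmult (f : ℕ → ℕ) (k : ℕ) : ℕ := Nat.card {j : ℕ // f j = k}

/-- Orthogonal: every even positive part occurs with even multiplicity. -/
def IsOrthogonal (f : ℕ → ℕ) : Prop := ∀ k, 0 < k → Even k → Even (pmult f k)

/-- Symplectic: every odd positive part occurs with even multiplicity. -/
def IsSymplectic (f : ℕ → ℕ) : Prop := ∀ k, 0 < k → Odd k → Even (pmult f k)

/-- Dominance order for ℕ-valued sequences. -/
def NDomLE (f g : ℕ → ℕ) : Prop :=
  ∀ N, ∑ j ∈ Finset.range N, f j ≤ ∑ j ∈ Finset.range N, g j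

/-- Dominance order for ℤ-valued sequences. -/
def DomLE (f g : ℕ → ℤ) : Prop :=
  ∀ N, ∑ j ∈ Finset.range N, f j ≤ ∑ j ∈ Finset.range N, g j

/-- `ν` is the `P`-collapse of `μ` (both of total size `m`): `ν` is a partition of `m`
    satisfying `P`, `ν ≤ μ`, and every partition `σ` of `m` satisfying `P` with `σ ≤ μ`
    satisfies `σ ≤ ν`. -/
def IsCollapse (P : (ℕ → ℕ) → Prop) (m : ℕ) (μ ν : ℕ → ℕ) : Prop :=
  IsPartitionOf ν m ∧ P ν ∧ NDomLE ν μ ∧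
    ∀ σ, IsPartitionOf σ m → P σ → NDomLE σ μ → NDomLE σ ν

/-- B-collapse (largest orthogonal partition below `μ`, `m` odd). -/
def IsBCollapse : ℕ → (ℕ → ℕ) → (ℕ → ℕ) → Prop := IsCollapse IsOrthogonal
/-- C-collapse (largest symplectic partition below `μ`, `m` even). -/
def IsCCollapse : ℕ → (ℕ → ℕ) → (ℕ → ℕ) → Prop := IsCollapse IsSymplectic
/-- D-collapse (largest orthogonal partition below `μ`, `m` even). -/
def IsDCollapse : ℕ → (ℕ → ℕ) → (ℕ → ℕ) → Prop := IsCollapse IsOrthogonal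

/-- `μ^−` : decrease the smallest nonzero part by 1. -/
def minusOne (f : ℕ → ℕ) : ℕ → ℕ :=
  fun j => if 0 < f j ∧ f (j+1) = 0 then f j - 1 else f j

/-- `μ^+` : increase the largest part by 1. -/
def plusOne (f : ℕ → ℕ) : ℕ → ℕ := fun j => if j = 0 then f 0 + 1 else f j

/-- `u = f ∪ g` : `u` is weakly decreasing, finitely supported, and every positive
    part occurs in `u` with multiplicity the sum of its multiplicities in `f` and `g`. -/
def IsUnionOf (u f g : ℕ → ℕ) : Prop :=
  Antitone u ∧ (∃ N, ∀ j, N ≤ j → u j = 0) ∧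
    ∀ k, 0 < k → pmult u k = pmult f k + pmult g k

/-- The sequence ξ attached to `(f, g, ε₁, ε₂, d)`.  Index `j` here corresponds to the
    1-based index `j+1` of the paper. -/
def xiSeq (f g : ℕ → ℕ) (e1 e2 d : ℕ) : ℕ → ℤ := fun j =>
  if (j + 1) % 2 = (d + 1) % 2 ∧ f j % 2 = e1 ∧ g j % 2 = e2 ∧
      (j = 0 ∨ f j + g j < f (j - 1) + g (j - 1)) then 1
  else if (j + 1) % 2 = d % 2 ∧ f j % 2 = e1 ∧ g j % 2 = e2 ∧
      f (j + 1) + g (j + 1) < f j + g j then -1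
  else 0

/-- The Waldspurger sequence `W(f,g) = f + g + ξ` (ℤ-valued a priori). -/
def wald (f g : ℕ → ℕ) (e1 e2 d : ℕ) : ℕ → ℤ :=
  fun j => (f j : ℤ) + (g j : ℤ) + xiSeq f g e1 e2 d j

/-- The partition consisting of `l` copies of `a`. -/
def rect (a l : ℕ) : ℕ → ℕ := fun j => if j < l then a else 0

/-- `l−1` copies of `a₁+a₂` followed by one copy of `a₁+a₂−1`. -/
def rectShape (a1 a2 l : ℕ) : ℕ → ℕ :=
  fun j => if j + 1 < l then a1 + a2 else if j + 1 = l then a1 + a2 - 1 else 0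

section Aux

lemma card_lt' (n : ℕ) : Nat.card {j : ℕ // j < n} = n := by
  rw [← Nat.card_congr Fin.equivSubtype, Nat.card_eq_fintype_card, Fintype.card_fin]

lemma card_Ico' (a b : ℕ) : Nat.card {j : ℕ // a ≤ j ∧ j < b} = b - a := by
  have e : {j : ℕ // a ≤ j ∧ j < b} ≃ {j : ℕ // j < b - a} :=
    ⟨fun x => ⟨x.1 - a, by have := x.2; omega⟩,
     fun y => ⟨y.1 + a, by have := y.2; omega⟩,
     fun x => by apply Subtype.ext; have := x.2; simp; omega,
     fun y => by apply Subtype.ext; simp⟩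
  rw [Nat.card_congr e, card_lt']

lemma pmult_eq_of_iff {f : ℕ → ℕ} {k a b : ℕ} (h : ∀ j, f j = k ↔ (a ≤ j ∧ j < b)) :
    pmult f k = b - a := by
  unfold pmult
  rw [Nat.card_congr (Equiv.subtypeEquivRight h), card_Ico']

lemma pmult_eq_zero {f : ℕ → ℕ} {k : ℕ} (h : ∀ j, f j ≠ k) : pmult f k = 0 := by
  unfold pmult
  have : IsEmpty {j : ℕ // f j = k} := ⟨fun x => h x.1 x.2⟩
  exact Nat.card_of_isEmpty

lemma ptrans_eq_of_iff {f : ℕ → ℕ} {k b : ℕ} (h : ∀ j, k + 1 ≤ f j ↔ j < b) :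
    ptrans f k = b := by
  unfold ptrans
  rw [Nat.card_congr (Equiv.subtypeEquivRight h), card_lt']

lemma sum_if_lt (c m N : ℕ) :
    ∑ j ∈ Finset.range N, (if j < m then c else 0) = c * min N m := by
  induction N with
  | zero => simp
  | succ N ih =>
    rw [Finset.sum_range_succ, ih]
    rcases lt_or_ge N m with h | h
    · rw [if_pos h, min_eq_left h.le, min_eq_left (by omega), Nat.mul_succ]
    · rw [if_neg (by omega), min_eq_right h, min_eq_right (by omega), add_zero]

lemma partition_sum_le {f : ℕ → ℕ} {m : ℕ} (h : IsPartitionOf f m) (N : ℕ) :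
    ∑ j ∈ Finset.range N, f j ≤ m := by
  obtain ⟨hA, N0, hz, hsum⟩ := h
  rcases le_or_gt N N0 with hle | hlt
  · calc ∑ j ∈ Finset.range N, f j ≤ ∑ j ∈ Finset.range N0, f j :=
        Finset.sum_le_sum_of_subset (Finset.range_subset_range.2 hle)
      _ = m := hsum
  · rw [Finset.sum_subset (Finset.range_subset_range.2 hlt.le)
      (fun x _ hx => hz x (by simpa using hx))] at hsum
    exact hsum.le

lemma collapse_unique {P : (ℕ → ℕ) → Prop} {m : ℕ} {μ ν ν' : ℕ → ℕ}
    (h : IsCollapse P m μ ν) (h' : IsCollapse P m μ ν') : ν = ν' := by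
  have h1 : NDomLE ν ν' := h'.2.2.2 ν h.1 h.2.1 h.2.2.1
  have h2 : NDomLE ν' ν := h.2.2.2 ν' h'.1 h'.2.1 h'.2.2.1
  funext j
  have ej : ∑ i ∈ Finset.range j, ν i = ∑ i ∈ Finset.range j, ν' i :=
    le_antisymm (h1 j) (h2 j)
  have ej1 := le_antisymm (h1 (j+1)) (h2 (j+1))
  rw [Finset.sum_range_succ, Finset.sum_range_succ] at ej1
  omega

end Aux

section Part1

lemma ptrans_rect (a l : ℕ) (ha : 1 ≤ a) : ptrans (rect a l) = rect l a := by
  funext k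
  rcases lt_or_ge k a with h | h
  · rw [show rect l a k = l from if_pos h]
    apply ptrans_eq_of_iff; intro j; unfold rect; split_ifs <;> omega
  · rw [show rect l a k = 0 from if_neg (by omega)]
    apply ptrans_eq_of_iff; intro j; unfold rect; split_ifs <;> omega

lemma orth_rect {a : ℕ} (l : ℕ) (ha : Odd a) : IsOrthogonal (rect a l) := by
  intro k hk hke
  obtain ⟨m, hm⟩ := ha; obtain ⟨r, hr⟩ := hke
  rw [pmult_eq_zero (fun j => by unfold rect; split_ifs <;> omega)]
  exact Even.zero

lemma part_rect (a l : ℕ) : IsPartitionOf (rect a l) (a * l) := by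
  refine ⟨fun x y hxy => by simp only [rect]; split_ifs <;> omega,
    l, fun j hj => if_neg (by omega), ?_⟩
  simp only [rect]
  rw [sum_if_lt, min_self]

lemma wald_eq (l a1 a2 : ℕ) (hl : Odd l) (hl1 : 1 ≤ l) (ha1 : Odd a1) (ha2 : Odd a2)
    (ha1' : 1 ≤ a1) (ha2' : 1 ≤ a2) (j : ℕ) :
    (rectShape a1 a2 l j : ℤ) = wald (rect a1 l) (rect a2 l) 1 1 (a1*l + a2*l - 1) j := by
  have hd : (a1*l + a2*l - 1) % 2 = 1 := by
    obtain ⟨p, hp⟩ := ha1.mul hl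
    obtain ⟨q, hq⟩ := ha2.mul hl
    omega
  obtain ⟨m1, hm1⟩ := ha1
  obtain ⟨m2, hm2⟩ := ha2
  obtain ⟨m3, hm3⟩ := hl
  unfold wald xiSeq rect rectShape
  set D := a1*l + a2*l - 1 with hDdef
  clear_value D
  split_ifs <;> first | omega | tauto

end Part1

section Part2

/-- candidate for the C-collapse of `(λᵗ)⁻` for `λ = rect a l` (it is `(λᵗ)⁻` itself). -/
def cand1 (l a : ℕ) : ℕ → ℕ :=
  fun j => (if j < a - 1 then 1 else 0) + (if j < a then l - 1 else 0)

/-- `ptrans (rectShape a1 a2 l)` where `s = a1 + a2`. -/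
def gW (l s : ℕ) : ℕ → ℕ :=
  fun j => (if j < s - 1 then 1 else 0) + (if j < s then l - 1 else 0)

/-- candidate for the C-collapse of `(Wᵗ)⁻`. -/
def candW (l s : ℕ) : ℕ → ℕ :=
  fun j => (if j < s - 2 then 1 else 0) + (if j < s then l - 1 else 0)

/-- `(Wᵗ)⁻` for `l ≥ 2`. -/
def muW (l s : ℕ) : ℕ → ℕ :=
  fun j => (if j < s - 1 then 2 else 0) + (if j < s then l - 2 else 0)

lemma mo_rect (a l : ℕ) (ha : 1 ≤ a) (hl : 1 ≤ l) :
    minusOne (ptrans (rect a l)) = cand1 l a := by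
  rw [ptrans_rect a l ha]
  funext j
  unfold minusOne rect cand1
  split_ifs <;> omega

lemma ptrans_rectShape (a1 a2 l : ℕ) (h1 : 1 ≤ a1) (h2 : 1 ≤ a2) (hl : 1 ≤ l) :
    ptrans (rectShape a1 a2 l) = gW l (a1 + a2) := by
  funext k
  rcases lt_trichotomy k (a1 + a2 - 1) with h | h | h
  · rw [show gW l (a1+a2) k = l from by unfold gW; split_ifs <;> omega]
    apply ptrans_eq_of_iff; intro j; unfold rectShape; split_ifs <;> omega
  · rw [show gW l (a1+a2) k = l - 1 from by unfold gW; split_ifs <;> omega]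
    apply ptrans_eq_of_iff; intro j; unfold rectShape; split_ifs <;> omega
  · rw [show gW l (a1+a2) k = 0 from by unfold gW; split_ifs <;> omega]
    apply ptrans_eq_of_iff; intro j; unfold rectShape; split_ifs <;> omega

lemma mo_gW (l s : ℕ) (hl : 2 ≤ l) (hs : 2 ≤ s) : minusOne (gW l s) = muW l s := by
  funext j; unfold minusOne gW muW; split_ifs <;> omega

lemma mo_gW_one (s : ℕ) (hs : 2 ≤ s) : minusOne (gW 1 s) = candW 1 s := by
  funext j; unfold minusOne gW candW; split_ifs <;> omega

lemma sum_cand1 (l a N : ℕ) :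
    ∑ j ∈ Finset.range N, cand1 l a j = min N (a-1) + (l-1) * min N a := by
  simp only [cand1]; rw [Finset.sum_add_distrib, sum_if_lt, sum_if_lt, one_mul]

lemma sum_candW (l s N : ℕ) :
    ∑ j ∈ Finset.range N, candW l s j = min N (s-2) + (l-1) * min N s := by
  simp only [candW]; rw [Finset.sum_add_distrib, sum_if_lt, sum_if_lt, one_mul]

lemma sum_muW (l s N : ℕ) :
    ∑ j ∈ Finset.range N, muW l s j = 2 * min N (s-1) + (l-2) * min N s := by
  simp only [muW]; rw [Finset.sum_add_distrib, sum_if_lt, sum_if_lt]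

lemma collapse1 (l a : ℕ) (hl : Odd l) (ha : Odd a) (hl1 : 1 ≤ l) (ha1 : 1 ≤ a) :
    IsCCollapse (a * l - 1) (cand1 l a) (cand1 l a) := by
  obtain ⟨m1, hm1⟩ := ha
  obtain ⟨m3, hm3⟩ := hl
  refine ⟨⟨fun x y hxy => by simp only [cand1]; split_ifs <;> omega,
      a, fun j hj => by simp only [cand1]; rw [if_neg (by omega), if_neg (by omega)], ?_⟩,
    ?_, fun N => le_refl _, fun σ _ _ hσ => hσ⟩
  · rw [sum_cand1, min_eq_right (by omega : a - 1 ≤ a), min_self]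
    have e1 : (l-1) * a = l * a - a := Nat.sub_one_mul l a
    have e2 : a * l = l * a := Nat.mul_comm a l
    have e3 : a ≤ l * a := Nat.le_mul_of_pos_left a hl1
    omega
  · intro k hk hkodd
    obtain ⟨mk, hmk⟩ := hkodd
    by_cases hkl : k = l
    · rw [pmult_eq_of_iff (a := 0) (b := a - 1)
        (fun j => by simp only [cand1]; split_ifs <;> omega)]
      exact ⟨m1, by omega⟩
    · rw [pmult_eq_zero (fun j => by simp only [cand1]; split_ifs <;> omega)]
      exact Even.zero

end Part2

section Part3

lemma collapseW (l a1 a2 : ℕ) (hl : Odd l) (ha1 : Odd a1) (ha2 : Odd a2)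
    (hl1 : 1 ≤ l) (h1 : 1 ≤ a1) (h2 : 1 ≤ a2) :
    IsCCollapse (a1*l + a2*l - 2) (minusOne (gW l (a1+a2))) (candW l (a1+a2)) := by
  obtain ⟨m1, hm1⟩ := ha1
  obtain ⟨m2, hm2⟩ := ha2
  obtain ⟨m3, hm3⟩ := hl
  set s := a1 + a2 with hsdef
  have hs : 2 ≤ s := by omega
  have hlsum : s * l = a1 * l + a2 * l := Nat.add_mul a1 a2 l
  have hsl : s ≤ s * l := Nat.le_mul_of_pos_right s hl1
  have hpart : IsPartitionOf (candW l s) (a1*l + a2*l - 2) := by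
    refine ⟨fun x y hxy => by simp only [candW]; split_ifs <;> omega,
      s, fun j hj => by simp only [candW]; rw [if_neg (by omega), if_neg (by omega)], ?_⟩
    rw [sum_candW, min_eq_right (by omega : s - 2 ≤ s), min_self]
    have e1 : (l-1) * s = l * s - s := Nat.sub_one_mul l s
    have e2 : l * s = s * l := Nat.mul_comm l s
    omega
  have hsymp : IsSymplectic (candW l s) := by
    intro k hk hkodd
    obtain ⟨mk, hmk⟩ := hkodd
    by_cases hkl : k = l
    · rw [pmult_eq_of_iff (a := 0) (b := s - 2)
        (fun j => by simp only [candW]; split_ifs <;> omega)]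
      exact ⟨m1 + m2, by omega⟩
    · rw [pmult_eq_zero (fun j => by simp only [candW]; split_ifs <;> omega)]
      exact Even.zero
  rcases eq_or_lt_of_le hl1 with hl1' | hl2
  · -- l = 1
    rw [show minusOne (gW l s) = candW l s from by rw [← hl1']; exact mo_gW_one s hs]
    exact ⟨hpart, hsymp, fun N => le_refl _, fun σ _ _ h => h⟩
  -- l ≥ 2
  rw [mo_gW l s hl2 hs]
  refine ⟨hpart, hsymp, ?_, ?_⟩
  · intro N
    rw [sum_candW, sum_muW]
    have e1 : (l-1) * min N s = (l-2) * min N s + min N s := by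
      rw [show l - 1 = (l-2) + 1 from by omega, Nat.succ_mul]
    omega
  · intro σ hσp hσs hσμ N
    rw [sum_candW]
    have hμN := hσμ N
    rw [sum_muW] at hμN
    have e1 : (l-1) * min N s = (l-2) * min N s + min N s := by
      rw [show l - 1 = (l-2) + 1 from by omega, Nat.succ_mul]
    by_cases hN : N = s - 1
    swap
    · omega
    subst hN
    set A := ∑ j ∈ Finset.range (s-1), σ j with hA
    have key : A ≠ l * (s-1) := by
      intro hEq
      have hσ0 : σ 0 ≤ l := by
        have h01 := hσμ 1
        rw [sum_muW, Finset.sum_range_one,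
          show min 1 (s-1) = 1 from by omega, show min 1 s = 1 from by omega] at h01
        omega
      have hub : ∀ j, σ j ≤ l := fun j => le_trans (hσp.1 (Nat.zero_le j)) hσ0
      have hall : ∀ j, j < s-1 → σ j = l := by
        by_contra hc
        push_neg at hc
        obtain ⟨j0, hj0, hj0ne⟩ := hc
        have hlt : A < ∑ _j ∈ Finset.range (s-1), l := by
          refine Finset.sum_lt_sum (fun i _ => hub i)
            ⟨j0, Finset.mem_range.2 hj0, lt_of_le_of_ne (hub j0) hj0ne⟩
        rw [Finset.sum_const, Finset.card_range, smul_eq_mul] at hlt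
        have : (s-1) * l = l * (s-1) := Nat.mul_comm _ _
        omega
      have htot := partition_sum_le hσp s
      have hsplit : ∑ j ∈ Finset.range s, σ j = A + σ (s-1) := by
        rw [hA, ← Finset.sum_range_succ, show s - 1 + 1 = s from by omega]
      have e3 : s * l = (s-1) * l + l := by
        have h' := Nat.sub_one_mul s l
        have h'' : l ≤ s * l := Nat.le_mul_of_pos_left l (by omega)
        omega
      have hlast : σ (s-1) ≤ l - 2 := by
        have : (s-1) * l = l * (s-1) := Nat.mul_comm _ _
        omega
      have hm : pmult σ l = s - 1 := by
        have hiff : ∀ j, σ j = l ↔ 0 ≤ j ∧ j < s - 1 := by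
          intro j
          constructor
          · intro hj
            refine ⟨Nat.zero_le j, ?_⟩
            by_contra hout
            have := hσp.1 (show s-1 ≤ j from by omega)
            omega
          · intro hj
            exact hall j hj.2
        have := pmult_eq_of_iff hiff
        omega
      have hev := hσs l (by omega) ⟨m3, hm3⟩
      rw [hm] at hev
      obtain ⟨r, hr⟩ := hev
      omega
    rw [show min (s-1) (s-2) = s-2 from by omega,
      show min (s-1) s = s-1 from by omega] at *
    have e4 : (l-1) * (s-1) = (l-2) * (s-1) + (s-1) := by
      rw [show l - 1 = (l-2) + 1 from by omega, Nat.succ_mul]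
    have e5 : 2 * (s-1) + (l-2) * (s-1) = l * (s-1) := by
      rw [← Nat.add_mul, show 2 + (l-2) = l from by omega]
    omega

end Part3

section Part4

lemma union_cands (l a1 a2 : ℕ) (hl1 : 1 ≤ l) (h1 : 1 ≤ a1) (h2 : 1 ≤ a2) :
    IsUnionOf (candW l (a1+a2)) (cand1 l a1) (cand1 l a2) := by
  set s := a1 + a2 with hsdef
  refine ⟨fun x y hxy => by simp only [candW]; split_ifs <;> omega,
    ⟨s, fun j hj => by simp only [candW]; rw [if_neg (by omega), if_neg (by omega)]⟩, ?_⟩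
  intro k hk
  by_cases hkl : k = l
  · rw [pmult_eq_of_iff (a := 0) (b := s-2)
        (fun j => by simp only [candW]; split_ifs <;> omega),
      pmult_eq_of_iff (a := 0) (b := a1-1)
        (fun j => by simp only [cand1]; split_ifs <;> omega),
      pmult_eq_of_iff (a := 0) (b := a2-1)
        (fun j => by simp only [cand1]; split_ifs <;> omega)]
    omega
  by_cases hkl1 : k = l - 1
  · rw [pmult_eq_of_iff (a := s-2) (b := s)
        (fun j => by simp only [candW]; split_ifs <;> omega),
      pmult_eq_of_iff (a := a1-1) (b := a1)
        (fun j => by simp only [cand1]; split_ifs <;> omega),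
      pmult_eq_of_iff (a := a2-1) (b := a2)
        (fun j => by simp only [cand1]; split_ifs <;> omega)]
    omega
  · rw [pmult_eq_zero (fun j => by simp only [candW]; split_ifs <;> omega),
      pmult_eq_zero (fun j => by simp only [cand1]; split_ifs <;> omega),
      pmult_eq_zero (fun j => by simp only [cand1]; split_ifs <;> omega)]

end Part4


/-- `l ≥ 1` odd, `a₁, a₂ ≥ 1` odd, `λᵢ = (aᵢ,…,aᵢ)` (`l` copies), a
special orthogonal partition of `dᵢ = aᵢ·l`.  Then `W = W(λ₁,λ₂)` (type B data,
`d = d₁+d₂−1`) consists of `l−1` copies of `a₁+a₂` followed by one copy of `a₁+a₂−1`,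
and if `ν, ν₁, ν₂` are C-collapses of `(Wᵗ)⁻, (λ₁ᵗ)⁻, (λ₂ᵗ)⁻` then `ν = ν₁ ∪ ν₂`. -/
theorem stmt11 (l a1 a2 : ℕ) (hl : Odd l) (hl1 : 1 ≤ l)
    (ha1 : Odd a1) (ha2 : Odd a2) (ha1' : 1 ≤ a1) (ha2' : 1 ≤ a2) :
    (IsPartitionOf (rect a1 l) (a1*l) ∧ IsOrthogonal (rect a1 l) ∧
      IsOrthogonal (ptrans (rect a1 l))) ∧
    (IsPartitionOf (rect a2 l) (a2*l) ∧ IsOrthogonal (rect a2 l) ∧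
      IsOrthogonal (ptrans (rect a2 l))) ∧
    (∀ j, (rectShape a1 a2 l j : ℤ)
        = wald (rect a1 l) (rect a2 l) 1 1 (a1*l + a2*l - 1) j) ∧
    ∀ ν ν1 ν2 : ℕ → ℕ,
      IsCCollapse (a1*l + a2*l - 2) (minusOne (ptrans (rectShape a1 a2 l))) ν →
      IsCCollapse (a1*l - 1) (minusOne (ptrans (rect a1 l))) ν1 →
      IsCCollapse (a2*l - 1) (minusOne (ptrans (rect a2 l))) ν2 →
      IsUnionOf ν ν1 ν2 := by
  refine ⟨⟨part_rect a1 l, orth_rect l ha1, ?_⟩, ⟨part_rect a2 l, orth_rect l ha2, ?_⟩,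
    wald_eq l a1 a2 hl hl1 ha1 ha2 ha1' ha2', ?_⟩
  · rw [ptrans_rect a1 l ha1']; exact orth_rect a1 hl
  · rw [ptrans_rect a2 l ha2']; exact orth_rect a2 hl
  · intro ν ν1 ν2 hν ν1h ν2h
    rw [mo_rect a1 l ha1' hl1] at ν1h
    rw [mo_rect a2 l ha2' hl1] at ν2h
    rw [ptrans_rectShape a1 a2 l ha1' ha2' hl1] at hν
    have u1 : ν1 = cand1 l a1 := collapse_unique ν1h (collapse1 l a1 hl ha1 hl1 ha1')
    have u2 : ν2 = cand1 l a2 := collapse_unique ν2h (collapse1 l a2 hl ha2 hl1 ha2')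
    have u : ν = candW l (a1+a2) :=
      collapse_unique hν (collapseW l a1 a2 hl ha1 ha2 hl1 ha1' ha2')
    rw [u, u1, u2]
    exact union_cands l a1 a2 hl1 ha1' ha2'
end

section
/- Let μ be an orthogonal partition of the odd number 2m+1, and let k > 0 be even with μ_k ≥ μ_{k+1} + 2. Define ν by ν_j = μ_j − 2 for j ≤ k and ν_j = μ_j for j > k. Then ν is an orthogonal partition of 2(m−k)+1; if μ is special then ν is special; and if σ is a C-collapse of (ν^t)^− and τ is a C-collapse of (μ^t)^−, then τ = σ ∪ (k,k). -/
/-- Decrease the first `k` parts of `μ` by 2. -/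
def stripTwo (μ : ℕ → ℕ) (k : ℕ) : ℕ → ℕ := fun j => if j < k then μ j - 2 else μ j

/-- The partition `(k,k)` with two parts equal to `k`. -/
def twoParts (k : ℕ) : ℕ → ℕ := fun j => if j < 2 then k else 0

namespace W

/-- partial sums -/
def ps (f : ℕ → ℕ) (n : ℕ) : ℕ := ∑ j ∈ Finset.range n, f j

lemma ps_succ (f : ℕ → ℕ) (n : ℕ) : ps f (n+1) = ps f n + f n := Finset.sum_range_succ _ _

lemma ps_mono (f : ℕ → ℕ) : Monotone (ps f) := by
  intro a b hab
  exact Finset.sum_le_sum_of_subset (Finset.range_subset_range.mpr hab)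

lemma ps_stable {f : ℕ → ℕ} {N : ℕ} (hN : ∀ j, N ≤ j → f j = 0) {n : ℕ} (h : N ≤ n) :
    ps f n = ps f N := by
  induction n with
  | zero =>
    have : N = 0 := by omega
    rw [this]
  | succ n ih =>
    rcases Nat.lt_or_ge n N with h1 | h1
    · have : N = n + 1 := by omega
      rw [this]
    · rw [ps_succ, ih h1, hN n h1, add_zero]

lemma mem_iff_lt_card {F : Finset ℕ} (hdc : ∀ i j, i ≤ j → j ∈ F → i ∈ F) :
    ∀ j, j ∈ F ↔ j < F.card := by
  intro j
  constructor
  · intro hj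
    have hsub : Finset.range (j+1) ⊆ F := by
      intro i hi
      exact hdc i j (by simpa [Nat.lt_succ_iff] using hi) hj
    have := Finset.card_le_card hsub
    simp [Finset.card_range] at this
    omega
  · intro hj
    by_contra hjF
    have hsub : F ⊆ Finset.range j := by
      intro i hi
      rw [Finset.mem_range]
      by_contra h
      exact hjF (hdc j i (Nat.le_of_not_lt h) hi)
    have := Finset.card_le_card hsub
    simp [Finset.card_range] at this
    omega

section Bridge
variable {f : ℕ → ℕ} {N : ℕ}

lemma lt_ptrans_iff (hf : Antitone f) (hN : ∀ j, N ≤ j → f j = 0) (c j : ℕ) :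
    j < ptrans f c ↔ c + 1 ≤ f j := by
  classical
  set F := (Finset.range N).filter (fun j => c+1 ≤ f j) with hF
  have hmemF : ∀ j, j ∈ F ↔ c + 1 ≤ f j := by
    intro j
    simp only [hF, Finset.mem_filter, Finset.mem_range]
    constructor
    · tauto
    · intro h
      refine ⟨?_, h⟩
      by_contra hh
      have := hN j (Nat.le_of_not_lt hh)
      omega
  have hdc : ∀ i j, i ≤ j → j ∈ F → i ∈ F := by
    intro i j hij hj
    rw [hmemF] at *
    exact le_trans hj (hf hij)
  have hcard := mem_iff_lt_card hdc
  have hset : {j : ℕ | c + 1 ≤ f j} = (Finset.range F.card : Finset ℕ) := by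
    ext j
    simp only [Set.mem_setOf_eq, Finset.coe_range, Set.mem_Iio]
    rw [← hmemF, hcard]
  have hval : ptrans f c = F.card := by
    show Nat.card {j : ℕ | c + 1 ≤ f j} = F.card
    rw [Nat.card_coe_set_eq, hset, Set.ncard_coe_finset, Finset.card_range]
  rw [hval, ← hcard, hmemF]

lemma ptrans_eq_of_iff (hf : Antitone f) (hN : ∀ j, N ≤ j → f j = 0) {c v : ℕ}
    (hv : ∀ j, j < v ↔ c + 1 ≤ f j) : ptrans f c = v := by
  have h2 : ∀ j, j < ptrans f c ↔ j < v := fun j => (lt_ptrans_iff hf hN c j).trans (hv j).symm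
  rcases Nat.lt_trichotomy (ptrans f c) v with h | h | h
  · have := (h2 (ptrans f c)).mpr h; omega
  · exact h
  · have := (h2 v).mp h; omega

lemma ptrans_antitone (hf : Antitone f) (hN : ∀ j, N ≤ j → f j = 0) :
    Antitone (ptrans f) := by
  intro a b hab
  by_contra h
  have h1 := (lt_ptrans_iff hf hN b (ptrans f a)).mp (Nat.lt_of_not_ge h)
  have h2 := (lt_ptrans_iff hf hN a (ptrans f a)).mpr (by omega)
  omega

lemma ptrans_le (hf : Antitone f) (hN : ∀ j, N ≤ j → f j = 0) (c : ℕ) : ptrans f c ≤ N := by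
  by_contra h
  have := (lt_ptrans_iff hf hN c N).mp (by omega)
  have := hN N le_rfl
  omega

lemma ptrans_supp (hf : Antitone f) (hN : ∀ j, N ≤ j → f j = 0) {c : ℕ} (h : f 0 ≤ c) :
    ptrans f c = 0 := by
  by_contra hc
  have := (lt_ptrans_iff hf hN c 0).mp (by omega)
  omega

lemma pmult_eq (hf : Antitone f) (hN : ∀ j, N ≤ j → f j = 0) {t : ℕ} (ht : 0 < t) :
    pmult f t = ptrans f (t-1) - ptrans f t := by
  have hset : {j : ℕ | f j = t} = (Finset.Ico (ptrans f t) (ptrans f (t-1)) : Finset ℕ) := by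
    ext j
    simp only [Set.mem_setOf_eq, Finset.coe_Ico, Set.mem_Ico]
    have h1 := lt_ptrans_iff hf hN (t-1) j
    have h2 := lt_ptrans_iff hf hN t j
    omega
  show Nat.card {j : ℕ | f j = t} = _
  rw [Nat.card_coe_set_eq, hset, Set.ncard_coe_finset, Nat.card_Ico]

lemma ptrans_ptrans (hf : Antitone f) (hN : ∀ j, N ≤ j → f j = 0) (c : ℕ) :
    ptrans (ptrans f) c = f c := by
  apply ptrans_eq_of_iff (N := f 0) (ptrans_antitone hf hN)
    (fun j hj => ptrans_supp hf hN hj)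
  intro j
  have : c + 1 ≤ ptrans f j ↔ c < ptrans f j := Iff.rfl
  rw [this, lt_ptrans_iff hf hN]
  omega

lemma pmult_ptrans (hf : Antitone f) (hN : ∀ j, N ≤ j → f j = 0) {t : ℕ} (ht : 0 < t) :
    pmult (ptrans f) t = f (t-1) - f t := by
  rw [pmult_eq (N := f 0) (ptrans_antitone hf hN)
    (fun j hj => ptrans_supp hf hN hj) ht,
    ptrans_ptrans hf hN, ptrans_ptrans hf hN]

lemma ps_eq_sum_min (hf : Antitone f) (hN : ∀ j, N ≤ j → f j = 0) {C : ℕ} (hC : f 0 ≤ C)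
    (n : ℕ) : ps f n = ∑ c ∈ Finset.range C, min (ptrans f c) n := by
  classical
  have h1 : ∀ j ∈ Finset.range n, f j = ∑ c ∈ Finset.range C, if c + 1 ≤ f j then 1 else 0 := by
    intro j _
    rw [← Finset.card_filter]
    have : (Finset.range C).filter (fun c => c + 1 ≤ f j) = Finset.range (f j) := by
      ext c
      simp only [Finset.mem_filter, Finset.mem_range]
      have : f j ≤ C := le_trans (hf (Nat.zero_le j)) hC
      omega
    rw [this, Finset.card_range]
  unfold ps
  rw [Finset.sum_congr rfl h1, Finset.sum_comm]
  apply Finset.sum_congr rfl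
  intro c _
  rw [← Finset.card_filter]
  have : (Finset.range n).filter (fun j => c + 1 ≤ f j) = Finset.range (min (ptrans f c) n) := by
    ext j
    simp only [Finset.mem_filter, Finset.mem_range, Nat.lt_min]
    rw [← lt_ptrans_iff hf hN c j]
    omega
  rw [this, Finset.card_range, Nat.min_comm]

end Bridge
end W

namespace W
section Chunk2
variable {f : ℕ → ℕ} {N : ℕ}

lemma ps_ptrans_total (hf : Antitone f) (hN : ∀ j, N ≤ j → f j = 0) {C : ℕ} (hC : f 0 ≤ C) :
    ps (ptrans f) C = ps f N := by
  rw [ps_eq_sum_min hf hN hC N]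
  apply Finset.sum_congr rfl
  intro c _
  exact (Nat.min_eq_left (ptrans_le hf hN c)).symm

lemma NDomLE.antisymm_ps {g : ℕ → ℕ} (h1 : NDomLE f g) (h2 : NDomLE g f) : f = g := by
  funext n
  have e : ∀ M, ps f M = ps g M := fun M => le_antisymm (h1 M) (h2 M)
  have e1 := e n
  have e2 := e (n+1)
  rw [ps_succ, ps_succ] at e2
  omega

-- minusOne lemmas; L = ptrans f 0 = number of nonzero parts
lemma minusOne_eq (hf : Antitone f) (hN : ∀ j, N ≤ j → f j = 0) (j : ℕ) :
    minusOne f j = if j + 1 = ptrans f 0 then f j - 1 else f j := by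
  unfold minusOne
  have b1 := lt_ptrans_iff hf hN 0 j
  have b2 := lt_ptrans_iff hf hN 0 (j+1)
  by_cases h : j + 1 = ptrans f 0
  · rw [if_pos h, if_pos]
    constructor
    · omega
    · by_contra hc
      have : 0 + 1 ≤ f (j+1) := by omega
      rw [← b2] at this
      omega
  · rw [if_neg h, if_neg]
    rintro ⟨h1, h2⟩
    have : j < ptrans f 0 := b1.mpr (by omega)
    have : ¬ (j + 1 < ptrans f 0) := fun hh => by have := b2.mp hh; omega
    omega

lemma minusOne_antitone (hf : Antitone f) (hN : ∀ j, N ≤ j → f j = 0) :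
    Antitone (minusOne f) := by
  apply antitone_nat_of_succ_le
  intro n
  rw [minusOne_eq hf hN, minusOne_eq hf hN]
  have hfn : f (n+1) ≤ f n := hf (by omega)
  by_cases h1 : n + 1 + 1 = ptrans f 0
  · rw [if_pos h1, if_neg (by omega)]
    omega
  · rw [if_neg h1]
    by_cases h2 : n + 1 = ptrans f 0
    · rw [if_pos h2]
      have : ¬ (n + 1 < ptrans f 0) := by omega
      rw [lt_ptrans_iff hf hN 0 (n+1)] at this
      omega
    · rw [if_neg h2]; exact hfn

lemma minusOne_supp (hN : ∀ j, N ≤ j → f j = 0) : ∀ j, N ≤ j → minusOne f j = 0 := by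
  intro j hj
  unfold minusOne
  rw [hN j hj]
  simp

lemma minusOne_ps (hf : Antitone f) (hN : ∀ j, N ≤ j → f j = 0)
    (hL : 1 ≤ ptrans f 0) {n : ℕ} (hn : ptrans f 0 ≤ n) :
    ps (minusOne f) n + 1 = ps f n := by
  set L := ptrans f 0 with hLdef
  have hfL : 1 ≤ f (L - 1) := by
    have := (lt_ptrans_iff hf hN 0 (L-1)).mp (by omega)
    omega
  induction n with
  | zero => omega
  | succ n ih =>
    rcases Nat.lt_or_ge n L with h1 | h1
    · have hnL : n + 1 = L := by omega
      have hps : ps (minusOne f) n = ps f n := by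
        unfold ps
        apply Finset.sum_congr rfl
        intro j hj
        simp only [Finset.mem_range] at hj
        rw [minusOne_eq hf hN, if_neg (by omega)]
      rw [ps_succ, ps_succ, hps, minusOne_eq hf hN, if_pos (by omega)]
      have : f n = f (L-1) := by rw [show n = L - 1 by omega]
      omega
    · rw [ps_succ, ps_succ, minusOne_eq hf hN, if_neg (by omega)]
      have := ih h1
      omega

-- pairing
lemma sum_range_two_mul (g : ℕ → ℕ) (R : ℕ) :
    ∑ c ∈ Finset.range (2*R), g c = ∑ i ∈ Finset.range R, (g (2*i) + g (2*i+1)) := by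
  induction R with
  | zero => simp
  | succ R ih =>
    rw [Finset.sum_range_succ, ← ih, show 2*(R+1) = 2*R+1+1 by ring,
      Finset.sum_range_succ, Finset.sum_range_succ]
    omega

lemma symp_parity (hf : Antitone f) (hN : ∀ j, N ≤ j → f j = 0) (hs : IsSymplectic f)
    {n : ℕ} (hn : 1 ≤ n) (hodd : Odd (ps f n)) : f (n-1) = f n := by
  by_contra hne
  have hlt : f n < f (n-1) := lt_of_le_of_ne (hf (by omega)) (fun e => hne e.symm)
  have hC : f 0 ≤ 2 * f 0 := by omega
  have := ps_eq_sum_min hf hN hC n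
  rw [sum_range_two_mul] at this
  have heven : Even (ps f n) := by
    rw [this]
    apply Finset.even_sum
    intro i _
    set P2 := ptrans f (2*i) with hP2
    set P3 := ptrans f (2*i+1) with hP3
    have hP32 : P3 ≤ P2 := ptrans_antitone hf hN (by omega)
    have hm : Even (pmult f (2*i+1)) := hs (2*i+1) (by omega) (by exact ⟨i, by ring⟩)
    rw [pmult_eq hf hN (by omega)] at hm
    simp only [Nat.add_sub_cancel] at hm
    rcases Nat.lt_or_ge P3 n with h3 | h3
    · rcases Nat.lt_or_ge P2 n with h2 | h2
      · rw [Nat.min_eq_left (by omega), Nat.min_eq_left (by omega)]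
        rw [Nat.even_sub hP32] at hm
        exact Nat.even_add.mpr hm
      · -- mixed : P3 < n ≤ P2
        have he : f (n-1) = 2*i+1 := by
          have ha := (lt_ptrans_iff hf hN (2*i) (n-1)).mp (by omega)
          have hb : ¬ (n - 1 < P3) := by omega
          rw [lt_ptrans_iff hf hN (2*i+1) (n-1)] at hb
          omega
        have hP2n : P2 = n := by
          apply le_antisymm
          · by_contra hc
            have := (lt_ptrans_iff hf hN (2*i) n).mp (by omega)
            omega
          · exact h2
        rw [Nat.min_eq_right (by omega), Nat.min_eq_left (by omega)]
        rw [Nat.even_sub hP32, hP2n] at hm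
        exact Nat.even_add.mpr hm
    · rw [Nat.min_eq_right (by omega), Nat.min_eq_right (by omega)]
      exact ⟨n, by ring⟩
  exact (Nat.not_odd_iff_even.mpr heven) hodd

end Chunk2
end W

namespace W
section Chunk3
variable {f X : ℕ → ℕ} {N : ℕ}

lemma corners_symp (hf : Antitone f) (hN : ∀ j, N ≤ j → f j = 0)
    (hc : ∀ n, 1 ≤ n → f n < f (n-1) → Even (ps f n)) : IsSymplectic f := by
  intro t ht hodd
  rw [pmult_eq hf hN ht]
  set b := ptrans f (t-1) with hb
  set a := ptrans f t with ha
  have hab : a ≤ b := ptrans_antitone hf hN (by omega)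
  rcases Nat.eq_or_lt_of_le hab with he | hlt
  · rw [← he]; simp
  · have hb1 : 1 ≤ b := by omega
    have hcb : Even (ps f b) := by
      apply hc b hb1
      have h1 : t ≤ f (b-1) := by
        have := (lt_ptrans_iff hf hN (t-1) (b-1)).mp (by omega)
        omega
      have h2 : ¬ (t ≤ f b) := by
        intro hh
        have : b < b := (lt_ptrans_iff hf hN (t-1) b).mpr (by omega)
        omega
      omega
    have hca : Even (ps f a) := by
      rcases Nat.eq_zero_or_pos a with h0 | h0
      · rw [h0]; exact ⟨0, rfl⟩
      · apply hc a h0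
        have h1 : t + 1 ≤ f (a-1) := (lt_ptrans_iff hf hN t (a-1)).mp (by omega)
        have h2 : f a ≤ t := by
          have : ¬ (a < a) := by omega
          rw [lt_ptrans_iff hf hN t a] at this
          omega
        omega
    have hsum : ps f b = ps f a + (b - a) * t := by
      have hsplit := Finset.sum_Ico_consecutive f (Nat.zero_le a) hab
      have hconst : ∑ j ∈ Finset.Ico a b, f j = (b - a) * t := by
        rw [Finset.sum_congr rfl (fun j hj => ?_), Finset.sum_const, Nat.card_Ico, smul_eq_mul]
        simp only [Finset.mem_Ico] at hj
        have h1 : t ≤ f j := by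
          have := (lt_ptrans_iff hf hN (t-1) j).mp (by omega)
          omega
        have h2 : ¬ (t + 1 ≤ f j) := by
          intro hh
          have : a ≤ j := hj.1
          have := (lt_ptrans_iff hf hN t j).mpr hh
          omega
        omega
      unfold ps
      simp only [Finset.range_eq_Ico]
      omega
    have heA : Even ((b-a)*t) := by
      rw [Nat.even_iff] at hca hcb ⊢
      omega
    rcases Nat.even_mul.mp heA with h | h
    · exact h
    · exact absurd h (by rw [Nat.even_iff]; rw [Nat.odd_iff] at hodd; omega)

def chain (X : ℕ → ℕ) (n : ℕ) : Prop :=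
  ∃ c, n ≤ c ∧ X c < X (c-1) ∧ ∀ m, n ≤ m → m ≤ c → Odd (ps X m)

open scoped Classical in
noncomputable def dd (X : ℕ → ℕ) (n : ℕ) : ℕ := if chain X n then 1 else 0

lemma dd_congr {X Y : ℕ → ℕ} {n m : ℕ} (h : chain X n ↔ chain Y m) : dd X n = dd Y m := by
  unfold dd
  by_cases h1 : chain X n
  · rw [if_pos h1, if_pos (h.mp h1)]
  · rw [if_neg h1, if_neg (fun hh => h1 (h.mpr hh))]

lemma dd_le_one : dd X n ≤ 1 := by
  unfold dd; split <;> omega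

lemma dd_odd {n : ℕ} (h : dd X n = 1) : Odd (ps X n) := by
  unfold dd at h
  split at h
  · rename_i hch
    obtain ⟨c, h1, h2, h3⟩ := hch
    exact h3 n le_rfl h1
  · omega

lemma dd_even {n : ℕ} (h : Even (ps X n)) : dd X n = 0 := by
  rcases Nat.eq_or_lt_of_le (dd_le_one (X := X) (n := n)) with he | hl
  · have := dd_odd (X := X) (n := n) (by omega)
    rw [Nat.even_iff] at h; rw [Nat.odd_iff] at this; omega
  · omega

lemma dd_eq_one_iff {n : ℕ} : dd X n = 1 ↔ chain X n := by
  unfold dd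
  split <;> simp_all

lemma chain_left {n : ℕ} (h : chain X (n+1)) (ho : Odd (ps X n)) : chain X n := by
  obtain ⟨c, h1, h2, h3⟩ := h
  refine ⟨c, by omega, h2, fun m hm1 hm2 => ?_⟩
  rcases Nat.eq_or_lt_of_le hm1 with he | hl
  · rw [← he]; exact ho
  · exact h3 m (by omega) hm2

lemma chain_right {n : ℕ} (h : chain X n) (hnc : X (n-1) ≤ X n) : chain X (n+1) := by
  obtain ⟨c, h1, h2, h3⟩ := h
  have : c ≠ n := by rintro rfl; omega
  exact ⟨c, by omega, h2, fun m hm1 hm2 => h3 m (by omega) hm2⟩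

lemma chain_corner {n : ℕ} (ho : Odd (ps X n)) (hcor : X n < X (n-1)) : chain X n :=
  ⟨n, le_rfl, hcor, fun m hm1 hm2 => by rw [le_antisymm hm2 hm1]; exact ho⟩

lemma runlem (hX : Antitone X) (hN : ∀ j, N ≤ j → X j = 0) (hD : Even (ps X N))
    {n : ℕ} (hn : 1 ≤ n) (ho : Odd (ps X n)) (he : Even (X (n-1))) : chain X n := by
  have hpos : 0 < X (n-1) := by
    by_contra h0
    have hz : X (n-1) = 0 := by omega
    have : ps X N % 2 = ps X n % 2 := by
      rcases Nat.le_total N n with h | h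
      · rw [ps_stable hN h]
      · have hdec : ps X N = ps X n + ∑ j ∈ Finset.Ico n N, X j := by
          unfold ps
          simp only [Finset.range_eq_Ico]
          rw [← Finset.sum_Ico_consecutive X (Nat.zero_le n) h]
        have hz2 : ∑ j ∈ Finset.Ico n N, X j = 0 := by
          apply Finset.sum_eq_zero
          intro j hj
          simp only [Finset.mem_Ico] at hj
          have : X j ≤ X (n-1) := hX (by omega)
          omega
        rw [hdec, hz2, add_zero]
    rw [Nat.even_iff] at hD; rw [Nat.odd_iff] at ho; omega
  have hex : ∃ c, n ≤ c ∧ X c < X (n-1) := by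
    refine ⟨max n N, le_max_left _ _, ?_⟩
    rw [hN _ (le_max_right _ _)]
    exact hpos
  classical
  set c0 := Nat.find hex with hc0
  obtain ⟨hc1, hc2⟩ : n ≤ c0 ∧ X c0 < X (n-1) := Nat.find_spec hex
  have hmin : ∀ m, n ≤ m → m < c0 → X m = X (n-1) := by
    intro m hm1 hm2
    have h1 : ¬ (n ≤ m ∧ X m < X (n-1)) := Nat.find_min hex hm2
    have h2 : X m ≤ X (n-1) := hX (by omega)
    omega
  have hodd : ∀ t, n + t ≤ c0 → Odd (ps X (n + t)) := by
    intro t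
    induction t with
    | zero => intro _; simpa using ho
    | succ t ih =>
      intro ht
      have h1 := ih (by omega)
      have h2 : X (n + t) = X (n-1) := hmin _ (by omega) (by omega)
      rw [show n + (t+1) = (n+t) + 1 by omega, ps_succ, h2]
      rcases h1 with ⟨x, hx⟩; rcases he with ⟨y, hy⟩
      exact ⟨x + y, by omega⟩
  refine ⟨c0, hc1, ?_, fun m hm1 hm2 => ?_⟩
  · rcases Nat.eq_or_lt_of_le hc1 with heq | hlt
    · rw [← heq] at hc2 ⊢; exact hc2
    · rw [hmin (c0 - 1) (by omega) (by omega)]; exact hc2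
  · have := hodd (m - n) (by omega)
    rw [show n + (m - n) = m by omega] at this
    exact this

end Chunk3
end W

namespace W
section Chunk4
variable {X : ℕ → ℕ} {N : ℕ}

noncomputable def Ev (X : ℕ → ℕ) (n : ℕ) : ℕ := ps X n - dd X n
noncomputable def nuX (X : ℕ → ℕ) (n : ℕ) : ℕ := Ev X (n+1) - Ev X n

lemma dd_le_ps (n : ℕ) : dd X n ≤ ps X n := by
  rcases Nat.eq_or_lt_of_le (dd_le_one (X := X) (n := n)) with he | hl
  · have := dd_odd (X := X) (n := n) (by omega)
    rcases this with ⟨x, hx⟩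
    omega
  · omega

lemma dd_pos_step {n : ℕ} (h1 : dd X (n+1) = 1) (h0 : dd X n = 0) : 1 ≤ X n := by
  by_contra hz
  have hXn : X n = 0 := by omega
  have hps : ps X (n+1) = ps X n := by rw [ps_succ, hXn, add_zero]
  have ho : Odd (ps X n) := by rw [← hps]; exact dd_odd h1
  have : chain X n := chain_left (dd_eq_one_iff.mp h1) ho
  rw [← dd_eq_one_iff] at this
  omega

lemma Ev_mono (n : ℕ) : Ev X n ≤ Ev X (n+1) := by
  unfold Ev
  have h1 := dd_le_ps (X := X) n
  have h2 := dd_le_ps (X := X) (n+1)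
  have h3 := ps_succ X n
  have h4 := dd_le_one (X := X) (n := n)
  have h5 := dd_le_one (X := X) (n := n+1)
  rcases Nat.eq_or_lt_of_le h5 with he | hl
  · rcases Nat.eq_zero_or_pos (dd X n) with h0 | h0
    · have := dd_pos_step (X := X) (by omega) h0
      omega
    · omega
  · omega

lemma nu_eq (n : ℕ) : nuX X n + dd X (n+1) = X n + dd X n := by
  unfold nuX Ev
  have h1 := dd_le_ps (X := X) n
  have h2 := dd_le_ps (X := X) (n+1)
  have h3 := ps_succ X n
  have h4 := Ev_mono (X := X) n
  unfold Ev at h4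
  rcases Nat.eq_or_lt_of_le (dd_le_one (X := X) (n := n+1)) with he | hl
  · rcases Nat.eq_zero_or_pos (dd X n) with h0 | h0
    · have := dd_pos_step (X := X) (by omega) h0
      omega
    · omega
  · omega

lemma ps_nuX (n : ℕ) : ps (nuX X) n = Ev X n := by
  induction n with
  | zero => simp [ps, Ev, dd_even (X := X) (n := 0) (by simp [ps])]
  | succ n ih =>
    rw [ps_succ, ih]
    unfold nuX
    have := Ev_mono (X := X) n
    omega

lemma nuX_antitone (hX : Antitone X) (hN : ∀ j, N ≤ j → X j = 0) (hD : Even (ps X N)) :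
    Antitone (nuX X) := by
  apply antitone_nat_of_succ_le
  intro n
  have e1 := nu_eq (X := X) n
  have e2 := nu_eq (X := X) (n+1)
  have hXa : X (n+1) ≤ X n := hX (by omega)
  have e2' : nuX X (n+1) + dd X (n+2) = X (n+1) + dd X (n+1) := nu_eq (X := X) (n+1)
  have key : X (n+1) + 2 * dd X (n+1) ≤ X n + dd X n + dd X (n+2) := by
    rcases Nat.eq_zero_or_pos (dd X (n+1)) with h0 | h0
    · omega
    · have hb : dd X (n+1) = 1 := by have := dd_le_one (X := X) (n := n+1); omega
      have hch := dd_eq_one_iff.mp hb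
      obtain ⟨c, hc1, hc2, hc3⟩ := hch
      rcases Nat.eq_or_lt_of_le hc1 with heq | hlt
      · -- corner at n+1 : X (n+1) < X n
        have hcor : X (n+1) < X n := by
          have := hc2
          rw [← heq] at this
          simpa using this
        rcases Nat.lt_or_ge (X (n+1) + 1) (X n) with hbig | hsmall
        · omega
        · have hXeq : X n = X (n+1) + 1 := by omega
          rcases Nat.even_or_odd (ps X n) with hev | hod
          · -- runlem at n+2
            have ho1 : Odd (ps X (n+1)) := dd_odd hb
            have hXnodd : Odd (X n) := by
              have := ps_succ X n
              rw [Nat.even_iff] at hev; rw [Nat.odd_iff] at ho1 ⊢; omega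
            have hXn1even : Even (X (n+1)) := by
              rw [Nat.odd_iff] at hXnodd; rw [Nat.even_iff]; omega
            have ho2 : Odd (ps X (n+2)) := by
              have h6 : ps X (n+2) = ps X (n+1) + X (n+1) := ps_succ X (n+1)
              rw [Nat.odd_iff] at ho1 ⊢; rcases hXn1even with ⟨y, hy⟩; omega
            have : chain X (n+2) :=
              runlem hX hN hD (by omega) ho2 (by simpa using hXn1even)
            rw [← dd_eq_one_iff] at this
            omega
          · have : chain X n := chain_left (dd_eq_one_iff.mp hb) hod
            rw [← dd_eq_one_iff] at this
            omega
      · -- witness c ≥ n+2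
        have hch2 : chain X (n+2) :=
          ⟨c, by omega, hc2, fun m hm1 hm2 => hc3 m (by omega) hm2⟩
        have hdd2 : dd X (n+2) = 1 := dd_eq_one_iff.mpr hch2
        rcases Nat.lt_or_ge (X (n+1)) (X n) with hbig | hsmall
        · omega
        · have hXeq : X n = X (n+1) := by omega
          have ho1 : Odd (ps X (n+1)) := hc3 (n+1) le_rfl (by omega)
          have ho2 : Odd (ps X (n+2)) := hc3 (n+2) (by omega) (by omega)
          have hXn1even : Even (X (n+1)) := by
            have h6 : ps X (n+2) = ps X (n+1) + X (n+1) := ps_succ X (n+1)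
            rw [Nat.odd_iff] at ho1 ho2; rw [Nat.even_iff]; omega
          have hodn : Odd (ps X n) := by
            have := ps_succ X n
            rw [Nat.odd_iff] at ho1 ⊢; rw [Nat.even_iff] at hXn1even; omega
          have : chain X n := chain_left (dd_eq_one_iff.mp hb) hodn
          rw [← dd_eq_one_iff] at this
          omega
  omega

lemma nuX_corner_even (hX : Antitone X) (hN : ∀ j, N ≤ j → X j = 0) (hD : Even (ps X N))
    {n : ℕ} (hn : 1 ≤ n) (hcor : nuX X n < nuX X (n-1)) : Even (ps (nuX X) n) := by
  rw [ps_nuX]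
  unfold Ev
  rcases Nat.eq_or_lt_of_le (dd_le_one (X := X) (n := n)) with he | hl
  · have := dd_odd (X := X) (n := n) (by omega)
    rw [Nat.odd_iff] at this; rw [Nat.even_iff]; omega
  · have hdd0 : dd X n = 0 := by omega
    rcases Nat.even_or_odd (ps X n) with hev | hod
    · rw [Nat.even_iff] at hev ⊢; omega
    · exfalso
      have hnch : ¬ chain X n := by rw [← dd_eq_one_iff]; omega
      have hXodd : Odd (X (n-1)) := by
        rcases Nat.even_or_odd (X (n-1)) with he2 | ho2
        · exact absurd (runlem hX hN hD hn hod he2) hnch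
        · exact ho2
      have hXeq : X n = X (n-1) := by
        rcases Nat.eq_or_lt_of_le (hX (by omega : n - 1 ≤ n)) with he2 | hl2
        · omega
        · exact absurd (chain_corner hod hl2) hnch
      have hd1 : dd X (n+1) = 0 := by
        apply dd_even
        rw [ps_succ, Nat.even_iff]
        rw [Nat.odd_iff] at hod hXodd
        omega
      have hd2 : dd X (n-1) = 0 := by
        apply dd_even
        have hps : ps X n = ps X (n-1) + X (n-1) := by
          have h6 : ps X ((n-1)+1) = ps X (n-1) + X (n-1) := ps_succ X (n-1)
          rw [show n - 1 + 1 = n by omega] at h6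
          exact h6
        rw [Nat.even_iff]
        rw [Nat.odd_iff] at hod hXodd
        omega
      have e1 := nu_eq (X := X) n
      have e2 : nuX X (n-1) + dd X ((n-1)+1) = X (n-1) + dd X (n-1) := nu_eq (X := X) (n-1)
      rw [show n - 1 + 1 = n by omega] at e2
      omega

lemma nuX_supp (hN : ∀ j, N ≤ j → X j = 0) (hD : Even (ps X N)) :
    ∀ j, N ≤ j → nuX X j = 0 := by
  intro j hj
  have h1 : ps X j = ps X N := ps_stable hN hj
  have h2 : ps X (j+1) = ps X N := ps_stable hN (by omega)
  have d1 : dd X j = 0 := dd_even (by rw [h1]; exact hD)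
  have d2 : dd X (j+1) = 0 := dd_even (by rw [h2]; exact hD)
  unfold nuX Ev
  omega

lemma Ev_total (hN : ∀ j, N ≤ j → X j = 0) (hD : Even (ps X N)) :
    Ev X N = ps X N := by
  unfold Ev
  rw [dd_even hD]
  omega

lemma nuX_partition (hX : Antitone X) (hN : ∀ j, N ≤ j → X j = 0) (hD : Even (ps X N)) :
    IsPartitionOf (nuX X) (ps X N) := by
  refine ⟨nuX_antitone hX hN hD, N, nuX_supp hN hD, ?_⟩
  have := ps_nuX (X := X) N
  unfold ps at this
  rw [this, Ev_total hN hD]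

lemma nuX_symplectic (hX : Antitone X) (hN : ∀ j, N ≤ j → X j = 0) (hD : Even (ps X N)) :
    IsSymplectic (nuX X) := by
  apply corners_symp (nuX_antitone hX hN hD) (nuX_supp hN hD)
  intro n hn hcor
  exact nuX_corner_even hX hN hD hn hcor

lemma nuX_ndom : NDomLE (nuX X) X := by
  intro n
  have := ps_nuX (X := X) n
  unfold ps at this
  rw [this]
  unfold Ev
  exact Nat.sub_le _ _

lemma collapse_max (hX : Antitone X) (hN : ∀ j, N ≤ j → X j = 0) (hD : Even (ps X N))
    {ρ : ℕ → ℕ} (hρa : Antitone ρ) {Nρ : ℕ} (hρN : ∀ j, Nρ ≤ j → ρ j = 0)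
    (hρs : IsSymplectic ρ) (hρle : ∀ n, ps ρ n ≤ ps X n) :
    ∀ n, ps ρ n ≤ Ev X n := by
  intro n
  induction n using Nat.strong_induction_on with
  | _ n ih =>
    by_contra hcon
    have hEv : Ev X n = ps X n - dd X n := rfl
    have hd1 : dd X n ≤ 1 := dd_le_one
    have hdp : dd X n ≤ ps X n := dd_le_ps n
    have h1 : ps ρ n = ps X n := by have := hρle n; omega
    have hddn : dd X n = 1 := by omega
    have hodd : Odd (ps X n) := dd_odd hddn
    have hn1 : 1 ≤ n := by
      by_contra h
      have : n = 0 := by omega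
      subst this
      simp [ps] at hodd
    have hρeq : ρ (n-1) = ρ n := symp_parity hρa hρN hρs hn1 (by rw [h1]; exact hodd)
    have hpsρ1 : ps ρ n = ps ρ (n-1) + ρ (n-1) := by
      have h6 : ps ρ ((n-1)+1) = ps ρ (n-1) + ρ (n-1) := ps_succ ρ (n-1)
      rw [show n - 1 + 1 = n by omega] at h6
      exact h6
    have hpsρ2 : ps ρ (n+1) = ps ρ n + ρ n := ps_succ ρ n
    have hih := ih (n-1) (by omega)
    have hle1 : ps ρ (n+1) ≤ ps X (n+1) := hρle (n+1)
    have hps1 : ps X n = ps X (n-1) + X (n-1) := by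
      have h6 : ps X ((n-1)+1) = ps X (n-1) + X (n-1) := ps_succ X (n-1)
      rw [show n - 1 + 1 = n by omega] at h6
      exact h6
    have hps2 : ps X (n+1) = ps X n + X n := ps_succ X n
    have hXa : X n ≤ X (n-1) := hX (by omega)
    have hEv1 : Ev X (n-1) ≤ ps X (n-1) := Nat.sub_le _ _
    -- forces equalities
    have hXeq : X (n-1) = X n := by omega
    have hEveq : Ev X (n-1) = ps X (n-1) := by omega
    have hnu : nuX X (n-1) + 1 = X (n-1) := by
      have h7 : nuX X (n-1) = Ev X ((n-1)+1) - Ev X (n-1) := rfl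
      have h8 := Ev_mono (X := X) (n-1)
      rw [show n - 1 + 1 = n by omega] at h7 h8
      omega
    have hnule : nuX X n ≤ nuX X (n-1) := nuX_antitone hX hN hD (by omega : n - 1 ≤ n)
    have hEv3 : Ev X (n+1) = Ev X n + nuX X n := by
      have := Ev_mono (X := X) n
      unfold nuX at *
      omega
    have hEvle : Ev X (n+1) + 1 ≥ ps X (n+1) := by
      have := dd_le_one (X := X) (n := n+1)
      unfold Ev
      omega
    omega

lemma nuX_isCCollapse (hX : Antitone X) (hN : ∀ j, N ≤ j → X j = 0) (hD : Even (ps X N)) :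
    IsCCollapse (ps X N) X (nuX X) := by
  refine ⟨nuX_partition hX hN hD, nuX_symplectic hX hN hD, nuX_ndom, ?_⟩
  intro σ hσp hσs hσle
  obtain ⟨hσa, Nσ, hσN, hσsum⟩ := hσp
  intro n
  have := collapse_max hX hN hD hσa hσN hσs (fun M => hσle M) n
  have h2 := ps_nuX (X := X) n
  unfold ps at *
  omega

lemma collapse_unique {D : ℕ} {Y σ σ' : ℕ → ℕ} (h1 : IsCCollapse D Y σ)
    (h2 : IsCCollapse D Y σ') : σ = σ' := by
  obtain ⟨hp1, hs1, hle1, hmax1⟩ := h1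
  obtain ⟨hp2, hs2, hle2, hmax2⟩ := h2
  exact NDomLE.antisymm_ps (hmax2 σ hp1 hs1 hle1) (hmax1 σ' hp2 hs2 hle2)

end Chunk4
end W

namespace W
section Chunk5

lemma twoParts_antitone (k : ℕ) : Antitone (twoParts k) := by
  apply antitone_nat_of_succ_le
  intro n
  unfold twoParts
  split <;> split <;> omega

lemma twoParts_supp (k : ℕ) : ∀ j, 2 ≤ j → twoParts k j = 0 := by
  intro j hj
  unfold twoParts
  rw [if_neg (by omega)]

lemma ptrans_twoParts (k c : ℕ) (hk : 0 < k) :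
    ptrans (twoParts k) c = if c < k then 2 else 0 := by
  apply ptrans_eq_of_iff (twoParts_antitone k) (twoParts_supp k)
  intro j
  unfold twoParts
  split
  · rename_i h
    constructor
    · intro hj
      rw [if_pos (by omega)]
      omega
    · intro hj
      by_contra hc
      rw [if_neg (by omega)] at hj
      omega
  · rename_i h
    constructor
    · omega
    · intro hj
      split at hj <;> omega

lemma union_of_insert {v u : ℕ → ℕ} {Nv Nu p k : ℕ}
    (hva : Antitone v) (hvN : ∀ j, Nv ≤ j → v j = 0)
    (hua : Antitone u) (huN : ∀ j, Nu ≤ j → u j = 0)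
    (hlt : ∀ n, n < p → u n = v n) (h1 : u p = k) (h2 : u (p+1) = k)
    (hshift : ∀ n, p ≤ n → u (n+2) = v n) (hk : 0 < k) :
    IsUnionOf u v (twoParts k) := by
  have hvge : ∀ j, j < p → k ≤ v j := by
    intro j hj
    rw [← hlt j hj, ← h1]
    exact hua (by omega)
  have hvle : ∀ j, p ≤ j → v j ≤ k := by
    intro j hj
    rw [← hshift j hj, ← h2]
    exact hua (by omega)
  have hptr : ∀ c, ptrans u c = ptrans v c + (if c < k then 2 else 0) := by
    intro c
    apply ptrans_eq_of_iff hua huN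
    intro j
    by_cases hck : c < k
    · rw [if_pos hck]
      have hpP : p ≤ ptrans v c := by
        rcases Nat.eq_zero_or_pos p with h0 | h0
        · omega
        · have : p - 1 < ptrans v c :=
            (lt_ptrans_iff hva hvN c (p-1)).mpr (by have := hvge (p-1) (by omega); omega)
          omega
      rcases Nat.lt_or_ge j p with hj | hj
      · have hb := (lt_ptrans_iff hva hvN c j).mpr (by have := hvge j hj; omega)
        rw [hlt j hj]
        have := hvge j hj
        omega
      · rcases Nat.lt_or_ge j (p+2) with hj2 | hj2
        · have huj : u j = k := by
            rcases Nat.eq_or_lt_of_le hj with he | hl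
            · rw [← he]; exact h1
            · rw [show j = p + 1 by omega]; exact h2
          rw [huj]
          omega
        · rw [show j = (j - 2) + 2 by omega, hshift (j-2) (by omega)]
          have hb := lt_ptrans_iff hva hvN c (j-2)
          omega
    · rw [if_neg hck]
      have hPp : ptrans v c ≤ p := by
        by_contra hc
        have := (lt_ptrans_iff hva hvN c p).mp (by omega)
        have := hvle p le_rfl
        omega
      rcases Nat.lt_or_ge j p with hj | hj
      · rw [hlt j hj]
        exact (lt_ptrans_iff hva hvN c j).trans Iff.rfl
      · rcases Nat.lt_or_ge j (p+2) with hj2 | hj2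
        · have huj : u j = k := by
            rcases Nat.eq_or_lt_of_le hj with he | hl
            · rw [← he]; exact h1
            · rw [show j = p + 1 by omega]; exact h2
          rw [huj]
          omega
        · rw [show j = (j - 2) + 2 by omega, hshift (j-2) (by omega)]
          have hb := lt_ptrans_iff hva hvN c (j-2)
          omega
  refine ⟨hua, ⟨Nu, huN⟩, ?_⟩
  intro t ht
  rw [pmult_eq hua huN ht, pmult_eq hva hvN ht,
    pmult_eq (twoParts_antitone k) (twoParts_supp k) ht,
    hptr (t-1), hptr t, ptrans_twoParts k (t-1) hk, ptrans_twoParts k t hk]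
  have hmono : ptrans v t ≤ ptrans v (t-1) := ptrans_antitone hva hvN (by omega)
  split_ifs <;> omega

end Chunk5
end W

namespace W
section Chunk6
variable {μ : ℕ → ℕ} {m k N : ℕ}

lemma strip_lt (hμa : Antitone μ) (hstep : μ k + 2 ≤ μ (k-1)) (hk : 0 < k) :
    ∀ j, j < k → μ k + 2 ≤ μ j := by
  intro j hj
  exact le_trans hstep (hμa (by omega))

lemma strip_antitone (hμa : Antitone μ) (hstep : μ k + 2 ≤ μ (k-1)) (hk : 0 < k) :
    Antitone (stripTwo μ k) := by
  apply antitone_nat_of_succ_le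
  intro n
  unfold stripTwo
  have h1 := hμa (by omega : n ≤ n + 1)
  split
  · rename_i h
    rw [if_pos (by omega)]
    omega
  · rename_i h
    split
    · rename_i h2
      have hn : n + 1 = k := by omega
      have := strip_lt hμa hstep hk n (by omega)
      have : μ (n+1) ≤ μ k := hμa (by omega)
      omega
    · exact h1

lemma strip_supp (hμN : ∀ j, N ≤ j → μ j = 0) :
    ∀ j, N ≤ j → stripTwo μ k j = 0 := by
  intro j hj
  unfold stripTwo
  rw [hμN j hj]
  split <;> omega

lemma ps_strip_le (hμa : Antitone μ) (hstep : μ k + 2 ≤ μ (k-1)) (hk : 0 < k) :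
    ∀ M, M ≤ k → ps (stripTwo μ k) M + 2*M = ps μ M ∧ 2*M ≤ ps μ M := by
  intro M
  induction M with
  | zero => simp [ps]
  | succ M ih =>
    intro hM
    obtain ⟨ih1, ih2⟩ := ih (by omega)
    have hs : stripTwo μ k M = μ M - 2 := by
      unfold stripTwo
      rw [if_pos (by omega)]
    have hge := strip_lt hμa hstep hk M (by omega)
    constructor
    · rw [ps_succ, ps_succ, hs]
      omega
    · rw [ps_succ]
      omega

lemma ps_strip (hμa : Antitone μ) (hstep : μ k + 2 ≤ μ (k-1)) (hk : 0 < k)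
    {M : ℕ} (hM : k ≤ M) : ps (stripTwo μ k) M + 2*k = ps μ M := by
  have h0 := (ps_strip_le hμa hstep hk k le_rfl).1
  have : ∀ t, ps (stripTwo μ k) (k + t) + 2*k = ps μ (k + t) := by
    intro t
    induction t with
    | zero => simpa using h0
    | succ t ih =>
      have hs : stripTwo μ k (k+t) = μ (k+t) := by
        unfold stripTwo
        rw [if_neg (by omega)]
      rw [show k + (t+1) = (k+t)+1 by omega, ps_succ, ps_succ, hs]
      omega
  have := this (M - k)
  rw [show k + (M - k) = M by omega] at this
  exact this

lemma k_le_m (hμa : Antitone μ) (hμN : ∀ j, N ≤ j → μ j = 0)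
    (hμsum : ps μ N = 2*m+1) (hstep : μ k + 2 ≤ μ (k-1)) (hk : 0 < k) : k ≤ m := by
  have h1 := (ps_strip_le hμa hstep hk k le_rfl).2
  have h2 : ps μ k ≤ ps μ (max N k) := ps_mono μ (le_max_right _ _)
  rw [ps_stable hμN (le_max_left _ _)] at h2
  omega

lemma mu0_ge3 (hμa : Antitone μ) (hμN : ∀ j, N ≤ j → μ j = 0)
    (hμsum : ps μ N = 2*m+1) (hstep : μ k + 2 ≤ μ (k-1)) (hk : 0 < k) : 3 ≤ μ 0 := by
  by_contra hc
  have h1 : μ (k-1) ≤ μ 0 := hμa (by omega)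
  have h2 : μ (k-1) = 2 ∧ μ k = 0 := by omega
  have heven : Even (ps μ N) := by
    apply Finset.even_sum
    intro j hj
    rcases Nat.lt_or_ge j k with h | h
    · have ha := strip_lt hμa hstep hk j h
      have hb : μ j ≤ μ 0 := hμa (by omega)
      have : μ j = 2 := by omega
      rw [this]
      exact ⟨1, rfl⟩
    · have : μ j ≤ μ k := hμa h
      have : μ j = 0 := by omega
      rw [this]
      exact ⟨0, rfl⟩
  rw [hμsum, Nat.even_iff] at heven
  omega

-- transpose lemmas
lemma T4 (hμa : Antitone μ) (hμN : ∀ j, N ≤ j → μ j = 0)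
    (hstep : μ k + 2 ≤ μ (k-1)) (hk : 0 < k) :
    ∀ c, c < μ k → k + 1 ≤ ptrans μ c := by
  intro c hc
  have := (lt_ptrans_iff hμa hμN c k).mpr (by omega)
  omega

lemma T3a (hμa : Antitone μ) (hμN : ∀ j, N ≤ j → μ j = 0)
    (hstep : μ k + 2 ≤ μ (k-1)) (hk : 0 < k) : ptrans μ (μ k) = k := by
  apply ptrans_eq_of_iff hμa hμN
  intro j
  constructor
  · intro hj
    have := strip_lt hμa hstep hk j hj
    omega
  · intro hj
    by_contra hc
    have : μ j ≤ μ k := hμa (by omega)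
    omega

lemma T3b (hμa : Antitone μ) (hμN : ∀ j, N ≤ j → μ j = 0)
    (hstep : μ k + 2 ≤ μ (k-1)) (hk : 0 < k) : ptrans μ (μ k + 1) = k := by
  apply ptrans_eq_of_iff hμa hμN
  intro j
  constructor
  · intro hj
    have := strip_lt hμa hstep hk j hj
    omega
  · intro hj
    by_contra hc
    have : μ j ≤ μ k := hμa (by omega)
    omega

lemma T1 (hμa : Antitone μ) (hμN : ∀ j, N ≤ j → μ j = 0)
    (hstep : μ k + 2 ≤ μ (k-1)) (hk : 0 < k) :
    ∀ c, c + 1 ≤ μ k → ptrans (stripTwo μ k) c = ptrans μ c := by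
  intro c hc
  apply ptrans_eq_of_iff (strip_antitone hμa hstep hk) (strip_supp hμN)
  intro j
  rw [lt_ptrans_iff hμa hμN c j]
  unfold stripTwo
  split
  · rename_i h
    have := strip_lt hμa hstep hk j h
    omega
  · exact Iff.rfl

lemma T2 (hμa : Antitone μ) (hμN : ∀ j, N ≤ j → μ j = 0)
    (hstep : μ k + 2 ≤ μ (k-1)) (hk : 0 < k) :
    ∀ c, μ k ≤ c → ptrans (stripTwo μ k) c = ptrans μ (c+2) := by
  intro c hc
  apply ptrans_eq_of_iff (strip_antitone hμa hstep hk) (strip_supp hμN)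
  intro j
  rw [lt_ptrans_iff hμa hμN (c+2) j]
  unfold stripTwo
  split
  · rename_i h
    have := strip_lt hμa hstep hk j h
    omega
  · rename_i h
    have : μ j ≤ μ k := hμa (by omega)
    omega

lemma part1_orth (hμa : Antitone μ) (hμN : ∀ j, N ≤ j → μ j = 0)
    (hμo : IsOrthogonal μ) (hstep : μ k + 2 ≤ μ (k-1)) (hk : 0 < k) (hke : Even k) :
    IsOrthogonal (stripTwo μ k) := by
  intro t ht hte
  have hsa := strip_antitone hμa hstep hk
  have hss := strip_supp (μ := μ) (k := k) hμN
  rw [pmult_eq hsa hss ht]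
  rcases Nat.lt_trichotomy t (μ k) with h | h | h
  · rw [T1 hμa hμN hstep hk (t-1) (by omega), T1 hμa hμN hstep hk t (by omega)]
    have := hμo t ht hte
    rw [pmult_eq hμa hμN ht] at this
    exact this
  · -- t = μ k
    rw [T1 hμa hμN hstep hk (t-1) (by omega), T2 hμa hμN hstep hk t (by omega)]
    have h1 := hμo t ht hte
    rw [pmult_eq hμa hμN ht] at h1
    have h2 := hμo (t+2) (by omega) (by rcases hte with ⟨x,hx⟩; exact ⟨x+1, by omega⟩)
    rw [pmult_eq hμa hμN (by omega)] at h2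
    rw [show t + 2 - 1 = t + 1 by omega] at h2
    have h3a : ptrans μ (μ k) = k := T3a hμa hμN hstep hk
    have h3b : ptrans μ (μ k + 1) = k := T3b hμa hμN hstep hk
    have hm1 : ptrans μ t ≤ ptrans μ (t-1) := ptrans_antitone hμa hμN (by omega)
    have hm2 : ptrans μ (t+1) ≤ ptrans μ t := ptrans_antitone hμa hμN (by omega)
    have hm3 : ptrans μ (t+2) ≤ ptrans μ (t+1) := ptrans_antitone hμa hμN (by omega)
    rw [← h] at h3a h3b
    rw [Nat.even_iff] at *
    omega
  · rw [T2 hμa hμN hstep hk (t-1) (by omega), T2 hμa hμN hstep hk t (by omega)]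
    have h2 := hμo (t+2) (by omega) (by rcases hte with ⟨x,hx⟩; exact ⟨x+1, by omega⟩)
    rw [pmult_eq hμa hμN (by omega)] at h2
    rw [show t + 2 - 1 = t + 1 by omega] at h2
    rw [show t - 1 + 2 = t + 1 by omega]
    exact h2

lemma part1 (hμa : Antitone μ) (hμN : ∀ j, N ≤ j → μ j = 0)
    (hμsum : ps μ N = 2*m+1) (hμo : IsOrthogonal μ)
    (hstep : μ k + 2 ≤ μ (k-1)) (hk : 0 < k) (hke : Even k) :
    IsPartitionOf (stripTwo μ k) (2*(m-k)+1) ∧ IsOrthogonal (stripTwo μ k) := by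
  constructor
  · refine ⟨strip_antitone hμa hstep hk, max N k, fun j hj => strip_supp hμN j (by omega), ?_⟩
    have h1 := ps_strip hμa hstep hk (M := max N k) (le_max_right _ _)
    have h2 : ps μ (max N k) = 2*m+1 := by
      rw [ps_stable hμN (le_max_left _ _)]
      exact hμsum
    have h3 := k_le_m hμa hμN hμsum hstep hk
    show ps (stripTwo μ k) (max N k) = 2*(m-k)+1
    omega
  · exact part1_orth hμa hμN hμo hstep hk hke

lemma part2 (hμa : Antitone μ) (hμN : ∀ j, N ≤ j → μ j = 0)
    (hstep : μ k + 2 ≤ μ (k-1)) (hk : 0 < k) (hke : Even k)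
    (hto : IsOrthogonal (ptrans μ)) : IsOrthogonal (ptrans (stripTwo μ k)) := by
  intro t ht hte
  have hsa := strip_antitone hμa hstep hk
  have hss := strip_supp (μ := μ) (k := k) hμN
  rw [pmult_ptrans hsa hss ht]
  have h2 := hto t ht hte
  rw [pmult_ptrans hμa hμN ht] at h2
  have hmono : μ t ≤ μ (t-1) := hμa (by omega)
  rcases Nat.lt_trichotomy t k with h | h | h
  · -- both indices < k
    have e1 : stripTwo μ k (t-1) = μ (t-1) - 2 := by unfold stripTwo; rw [if_pos (by omega)]
    have e2 : stripTwo μ k t = μ t - 2 := by unfold stripTwo; rw [if_pos h]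
    have := strip_lt hμa hstep hk t h
    have := strip_lt hμa hstep hk (t-1) (by omega)
    rw [e1, e2, Nat.even_iff] at *
    omega
  · -- t = k
    have e1 : stripTwo μ k (t-1) = μ (t-1) - 2 := by unfold stripTwo; rw [if_pos (by omega)]
    have e2 : stripTwo μ k t = μ t := by unfold stripTwo; rw [if_neg (by omega)]
    have h3 : μ k + 2 ≤ μ (k-1) := hstep
    rw [e1, e2, ← h] at *
    rw [Nat.even_iff] at *
    omega
  · have e1 : stripTwo μ k (t-1) = μ (t-1) := by unfold stripTwo; rw [if_neg (by omega)]
    have e2 : stripTwo μ k t = μ t := by unfold stripTwo; rw [if_neg (by omega)]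
    rw [e1, e2]
    exact h2

end Chunk6
end W

namespace W
section Chunk7
variable {A B : ℕ → ℕ} {NA p k : ℕ}

lemma ML1 (hAa : Antitone A) (hAN : ∀ j, NA ≤ j → A j = 0)
    (hDA : Even (ps A NA)) (hk : 0 < k) (hke : Even k)
    (hge : ∀ j, j < p → k + 1 ≤ A j) (hle : A p ≤ k)
    (hB : ∀ j, B j = if j < p then A j else if j < p + 2 then k else A (j - 2)) :
    (∀ n, n < p → nuX B n = nuX A n) ∧ nuX B p = k ∧ nuX B (p+1) = k ∧
      (∀ n, p ≤ n → nuX B (n+2) = nuX A n) := by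
  have hBlt : ∀ j, j < p → B j = A j := fun j hj => by rw [hB j, if_pos hj]
  have hBp : B p = k := by rw [hB p, if_neg (by omega), if_pos (by omega)]
  have hBp1 : B (p+1) = k := by rw [hB (p+1), if_neg (by omega), if_pos (by omega)]
  have hBsh : ∀ j, p + 2 ≤ j → B j = A (j-2) := fun j hj => by
    rw [hB j, if_neg (by omega), if_neg (by omega)]
  have hBa : Antitone B := by
    apply antitone_nat_of_succ_le
    intro n
    rcases Nat.lt_trichotomy (n+1) p with h | h | h
    · rw [hBlt n (by omega), hBlt (n+1) h]
      exact hAa (by omega)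
    · rw [hBlt n (by omega), h, hBp]
      have := hge n (by omega)
      omega
    · rcases Nat.lt_or_ge (n+1) (p+2) with h2 | h2
      · have hpn : p = n := by omega
        subst hpn
        rw [hBp1, hBp]
      · rcases Nat.eq_or_lt_of_le h2 with he | hl
        · have hn : n = p + 1 := by omega
          subst hn
          rw [hBp1, hBsh (p+1+1) (by omega), show p+1+1-2 = p by omega]
          exact hle
        · rw [hBsh n (by omega), hBsh (n+1) (by omega), show n+1-2 = (n-2)+1 by omega]
          exact hAa (by omega)
  have hBN : ∀ j, NA + p + 2 ≤ j → B j = 0 := by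
    intro j hj
    rw [hBsh j (by omega)]
    exact hAN _ (by omega)
  have psB1 : ∀ n, n ≤ p → ps B n = ps A n := by
    intro n hn
    unfold ps
    apply Finset.sum_congr rfl
    intro j hj
    simp only [Finset.mem_range] at hj
    exact hBlt j (by omega)
  have psB3' : ∀ t, ps B (p+2+t) = ps A (p+t) + 2*k := by
    intro t
    induction t with
    | zero =>
      have h2 : ps B (p+2) = ps B p + B p + B (p+1) := by
        rw [show p + 2 = (p+1)+1 by omega, ps_succ, ps_succ]
      simp only [Nat.add_zero]
      rw [h2, hBp, hBp1, psB1 p le_rfl]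
      omega
    | succ t ih =>
      have e1 : ps B (p+2+(t+1)) = ps B (p+2+t) + B (p+2+t) := by
        rw [show p+2+(t+1) = (p+2+t)+1 by omega, ps_succ]
      have e2 : ps A (p+(t+1)) = ps A (p+t) + A (p+t) := by
        rw [show p+(t+1) = (p+t)+1 by omega, ps_succ]
      rw [e1, e2, ih, hBsh (p+2+t) (by omega), show p+2+t-2 = p+t by omega]
      omega
  have psB3 : ∀ n, p ≤ n → ps B (n+2) = ps A n + 2*k := by
    intro n hn
    have := psB3' (n - p)
    rw [show p+2+(n-p) = n+2 by omega, show p+(n-p) = n by omega] at this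
    exact this
  have psB2 : ps B (p+1) = ps A p + k := by
    rw [ps_succ, psB1 p le_rfl, hBp]
  have hDB : Even (ps B (NA + p + 2)) := by
    have h1 := psB3 (NA + p) (by omega)
    have h2 : ps A (NA+p) = ps A NA := ps_stable hAN (by omega)
    rw [show NA + p + 2 = (NA+p)+2 by omega, h1, h2]
    rcases hDA with ⟨x, hx⟩; rcases hke with ⟨y, hy⟩
    exact ⟨x + 2*y, by omega⟩
  have hcorA : 0 < p → A p < A (p-1) := by
    intro hp
    have := hge (p-1) (by omega)
    omega
  have hcorB : 0 < p → B p < B (p-1) := by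
    intro hp
    rw [hBp, hBlt (p-1) (by omega)]
    have := hge (p-1) (by omega)
    omega
  have chain0 : ∀ (X : ℕ → ℕ), ¬ chain X 0 := by
    rintro X ⟨c, hc1, hc2, hc3⟩
    have := hc3 0 le_rfl hc1
    simp [ps] at this
  -- CT1
  have CT1 : ∀ n, n ≤ p → (chain B n ↔ chain A n) := by
    intro n hn
    rcases Nat.eq_zero_or_pos n with h0 | h0
    · subst h0
      constructor <;> intro h <;> exact absurd h (chain0 _)
    constructor
    · rintro ⟨c, hc1, hc2, hc3⟩
      rcases le_or_gt c p with hcp | hcp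
      · refine ⟨c, hc1, ?_, fun m hm1 hm2 => ?_⟩
        · rcases Nat.eq_or_lt_of_le hcp with he | hl
          · subst he
            exact hcorA (by omega)
          · rw [hBlt c hl, hBlt (c-1) (by omega)] at hc2
            exact hc2
        · rw [← psB1 m (by omega)]
          exact hc3 m hm1 hm2
      · refine ⟨p, hn, hcorA (by omega), fun m hm1 hm2 => ?_⟩
        rw [← psB1 m (by omega)]
        exact hc3 m hm1 (by omega)
    · rintro ⟨c, hc1, hc2, hc3⟩
      rcases le_or_gt c p with hcp | hcp
      · refine ⟨c, hc1, ?_, fun m hm1 hm2 => ?_⟩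
        · rcases Nat.eq_or_lt_of_le hcp with he | hl
          · subst he
            exact hcorB (by omega)
          · rw [hBlt c hl, hBlt (c-1) (by omega)]
            exact hc2
        · rw [psB1 m (by omega)]
          exact hc3 m hm1 hm2
      · refine ⟨p, hn, hcorB (by omega), fun m hm1 hm2 => ?_⟩
        rw [psB1 m (by omega)]
        exact hc3 m hm1 (by omega)
  -- CT2
  have CT2 : ∀ n, p + 3 ≤ n → (chain B n ↔ chain A (n-2)) := by
    intro n hn
    constructor
    · rintro ⟨c, hc1, hc2, hc3⟩
      refine ⟨c - 2, by omega, ?_, fun m hm1 hm2 => ?_⟩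
      · rw [hBsh c (by omega), hBsh (c-1) (by omega), show c-1-2 = c-2-1 by omega] at hc2
        exact hc2
      · have := hc3 (m+2) (by omega) (by omega)
        rw [psB3 m (by omega)] at this
        rcases Nat.even_or_odd (ps A m) with he | ho
        · exfalso
          rcases he with ⟨x, hx⟩; rcases hke with ⟨y, hy⟩
          rw [Nat.odd_iff] at this
          omega
        · exact ho
    · rintro ⟨c, hc1, hc2, hc3⟩
      refine ⟨c + 2, by omega, ?_, fun m hm1 hm2 => ?_⟩
      · rw [show c+2-1 = c+1 by omega, hBsh (c+2) (by omega), hBsh (c+1) (by omega),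
          show c+2-2 = c by omega, show c+1-2 = c-1 by omega]
        exact hc2
      · have := hc3 (m-2) (by omega) (by omega)
        rw [show m = (m-2)+2 by omega, psB3 (m-2) (by omega)]
        rcases this with ⟨x, hx⟩; rcases hke with ⟨y, hy⟩
        exact ⟨x + 2*y, by omega⟩
  -- CT3
  have CT3 : dd B (p+1) = dd A p ∧ dd B (p+2) = dd A p := by
    rcases Nat.even_or_odd (ps A p) with he | ho
    · have d0 : dd A p = 0 := dd_even he
      have d1 : dd B (p+1) = 0 := by
        apply dd_even
        rw [psB2]
        rcases he with ⟨x, hx⟩; rcases hke with ⟨y, hy⟩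
        exact ⟨x + y, by omega⟩
      have d2 : dd B (p+2) = 0 := by
        apply dd_even
        rw [psB3 p le_rfl]
        rcases he with ⟨x, hx⟩; rcases hke with ⟨y, hy⟩
        exact ⟨x + 2*y, by omega⟩
      omega
    · have hp0 : 0 < p := by
        by_contra h
        have : p = 0 := by omega
        subst this
        simp [ps] at ho
      have d0 : dd A p = 1 := dd_eq_one_iff.mpr (chain_corner ho (hcorA hp0))
      have hob1 : Odd (ps B (p+1)) := by
        rw [psB2]
        rcases ho with ⟨x, hx⟩; rcases hke with ⟨y, hy⟩
        exact ⟨x + y, by omega⟩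
      have hob2 : Odd (ps B (p+2)) := by
        rw [psB3 p le_rfl]
        rcases ho with ⟨x, hx⟩; rcases hke with ⟨y, hy⟩
        exact ⟨x + 2*y, by omega⟩
      have d1 : dd B (p+1) = 1 := by
        apply dd_eq_one_iff.mpr
        apply runlem hBa hBN hDB (by omega) hob1
        rw [show p+1-1 = p by omega, hBp]
        exact hke
      have d2 : dd B (p+2) = 1 := by
        apply dd_eq_one_iff.mpr
        apply runlem hBa hBN hDB (by omega) hob2
        rw [show p+2-1 = p+1 by omega, hBp1]
        exact hke
      omega
  have ddeq1 : ∀ n, n ≤ p → dd B n = dd A n := fun n hn => dd_congr (CT1 n hn)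
  have ddeq2 : ∀ n, p + 3 ≤ n → dd B n = dd A (n-2) := fun n hn => dd_congr (CT2 n hn)
  -- conclusions
  refine ⟨?_, ?_, ?_, ?_⟩
  · intro n hn
    have e1 := nu_eq (X := B) n
    have e2 := nu_eq (X := A) n
    rw [hBlt n hn, ddeq1 n (by omega), ddeq1 (n+1) (by omega)] at e1
    omega
  · have e1 := nu_eq (X := B) p
    rw [hBp, ddeq1 p le_rfl, CT3.1] at e1
    omega
  · have e1 := nu_eq (X := B) (p+1)
    rw [hBp1, CT3.1, CT3.2] at e1
    omega
  · intro n hn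
    have e1 := nu_eq (X := B) (n+2)
    have e2 := nu_eq (X := A) n
    have h1 : dd B (n+2) = dd A n := by
      rcases Nat.eq_or_lt_of_le hn with he | hl
      · rw [← he]; exact CT3.2
      · rw [ddeq2 (n+2) (by omega), show n+2-2 = n by omega]
    have h2 : dd B (n+3) = dd A (n+1) := by
      rw [ddeq2 (n+3) (by omega), show n+3-2 = n+1 by omega]
    rw [hBsh (n+2) (by omega), show n+2-2 = n by omega, h1, show n+2+1 = n+3 by rfl, h2] at e1
    omega

end Chunk7
end W

namespace W
section Chunk8
variable {A B : ℕ → ℕ} {p k : ℕ}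

lemma chain_left_iter {X : ℕ → ℕ} {n c : ℕ} (hnc : n ≤ c) (h : chain X c)
    (ho : ∀ m, n ≤ m → m < c → Odd (ps X m)) : chain X n := by
  have : ∀ t, t ≤ c - n → chain X (c - t) := by
    intro t
    induction t with
    | zero => intro _; simpa using h
    | succ t ih =>
      intro ht
      have h1 := ih (by omega)
      have h2 : Odd (ps X (c - (t+1))) := ho _ (by omega) (by omega)
      have := chain_left (n := c - (t+1)) (by rw [show c - (t+1) + 1 = c - t by omega]; exact h1) h2
      exact this
  have := this (c - n) (by omega)
  rw [show c - (c - n) = n by omega] at this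
  exact this

lemma ML2 (hBa : Antitone B) (hp : 0 < p) (hk2 : 2 ≤ k) (hke : Even k)
    (hAB : ∀ j, j < p - 1 → A j = B j)
    (hBpm : B (p-1) = A (p-1) + 1)
    (hA0 : ∀ j, p ≤ j → A j = 0)
    (hBp : B p = k) (hBp1 : B (p+1) = k - 1)
    (hB0 : ∀ j, p + 2 ≤ j → B j = 0)
    (hDA : Even (ps A p)) :
    (∀ n, n < p → nuX B n = nuX A n) ∧ nuX B p = k ∧ nuX B (p+1) = k ∧
      (∀ n, p ≤ n → nuX B (n+2) = nuX A n) := by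
  have hAa : Antitone A := by
    apply antitone_nat_of_succ_le
    intro n
    rcases Nat.lt_trichotomy (n+1) (p-1) with h | h | h
    · rw [hAB n (by omega), hAB (n+1) h]
      exact hBa (by omega)
    · rw [hAB n (by omega)]
      have h1 : B (p-1) ≤ B n := hBa (by omega)
      have h2 : A (n+1) = A (p-1) := by rw [h]
      omega
    · rcases Nat.lt_or_ge n p with h2 | h2
      · have : A (n+1) = 0 := hA0 _ (by omega)
        omega
      · rw [hA0 n (by omega), hA0 (n+1) (by omega)]
  have hAN : ∀ j, p ≤ j → A j = 0 := hA0
  have psAB : ∀ n, n ≤ p - 1 → ps B n = ps A n := by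
    intro n hn
    unfold ps
    apply Finset.sum_congr rfl
    intro j hj
    simp only [Finset.mem_range] at hj
    exact (hAB j (by omega)).symm
  have hpsA : ∀ n, p ≤ n → ps A n = ps A p := fun n hn => ps_stable hA0 hn
  have psBp : ps B p = ps A p + 1 := by
    have e1 : ps B p = ps B (p-1) + B (p-1) := by
      have := ps_succ B (p-1)
      rw [show p-1+1 = p by omega] at this
      exact this
    have e2 : ps A p = ps A (p-1) + A (p-1) := by
      have := ps_succ A (p-1)
      rw [show p-1+1 = p by omega] at this
      exact this
    rw [e1, e2, psAB (p-1) le_rfl, hBpm]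
    omega
  have psBp1 : ps B (p+1) = ps A p + 1 + k := by
    rw [ps_succ, psBp, hBp]
  have psBp2 : ps B (p+2) = ps A p + 2*k := by
    have := ps_succ B (p+1)
    rw [show p+1+1 = p+2 by omega] at this
    rw [this, psBp1, hBp1]
    omega
  have psB_after : ∀ n, p + 2 ≤ n → ps B n = ps A p + 2*k := by
    intro n hn
    rw [ps_stable hB0 hn, psBp2]
  have hDB : Even (ps B (p+2)) := by
    rw [psBp2]
    rcases hDA with ⟨x, hx⟩; rcases hke with ⟨y, hy⟩
    exact ⟨x + 2*y, by omega⟩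
  have hoA : Odd (ps B p) := by
    rw [psBp]
    rcases hDA with ⟨x, hx⟩
    exact ⟨x, by omega⟩
  have hoB1 : Odd (ps B (p+1)) := by
    rw [psBp1]
    rcases hDA with ⟨x, hx⟩; rcases hke with ⟨y, hy⟩
    exact ⟨x + y, by omega⟩
  have ddA_after : ∀ n, p ≤ n → dd A n = 0 := by
    intro n hn
    exact dd_even (by rw [hpsA n hn]; exact hDA)
  have ddB_after : ∀ n, p + 2 ≤ n → dd B n = 0 := by
    intro n hn
    apply dd_even
    rw [psB_after n hn]
    rcases hDA with ⟨x, hx⟩; rcases hke with ⟨y, hy⟩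
    exact ⟨x + 2*y, by omega⟩
  have chBp1 : chain B (p+1) := by
    apply chain_corner hoB1
    rw [show p+1-1 = p by omega, hBp]
    omega
  have chBp : chain B p := chain_left chBp1 hoA
  have ddBp1 : dd B (p+1) = 1 := dd_eq_one_iff.mpr chBp1
  have ddBp : dd B p = 1 := dd_eq_one_iff.mpr chBp
  have chain0 : ∀ (X : ℕ → ℕ), ¬ chain X 0 := by
    rintro X ⟨c, hc1, hc2, hc3⟩
    have := hc3 0 le_rfl hc1
    simp [ps] at this
  have hcorApm : 2 ≤ p → A (p-1) < A (p-2) := by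
    intro hp2
    have h1 : B (p-1) ≤ B (p-2) := hBa (by omega)
    rw [hBpm, ← hAB (p-2) (by omega)] at h1
    omega
  have CT : ∀ n, n ≤ p - 1 → (chain A n ↔ chain B n) := by
    intro n hn
    rcases Nat.eq_zero_or_pos n with h0 | h0
    · subst h0
      constructor <;> intro h <;> exact absurd h (chain0 _)
    have hp2 : 2 ≤ p := by omega
    constructor
    · rintro ⟨c, hc1, hc2, hc3⟩
      have hcple : c ≤ p - 1 := by
        by_contra hc
        rcases Nat.lt_or_ge p c with h | h
        · rw [hA0 c (by omega), hA0 (c-1) (by omega)] at hc2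
          omega
        · have hcp : c = p := by omega
          have := hc3 p (by omega) (by omega)
          rw [hpsA p le_rfl] at this
          rw [Nat.odd_iff] at this; rw [Nat.even_iff] at hDA; omega
      rcases Nat.lt_or_ge c (p-1) with hc4 | hc4
      · -- witness c ≤ p - 2 : same corner in B
        have hchBc : chain B c := by
          apply chain_corner
          · rw [psAB c (by omega)]
            exact hc3 c (by omega) le_rfl
          · rw [← hAB c (by omega), ← hAB (c-1) (by omega)]
            exact hc2
        exact chain_left_iter hc1 hchBc (fun m hm1 hm2 => by
          rw [psAB m (by omega)]; exact hc3 m hm1 (by omega))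
      · -- c = p - 1 : go through chain B p
        have hce : c = p - 1 := by omega
        have hchBpm : chain B (p-1) := by
          apply chain_left (n := p - 1)
          · rw [show p - 1 + 1 = p by omega]
            exact chBp
          · rw [psAB (p-1) le_rfl]
            rw [← hce]
            exact hc3 c (by omega) le_rfl
        exact chain_left_iter (by omega) hchBpm (fun m hm1 hm2 => by
          rw [psAB m (by omega)]; exact hc3 m hm1 (by omega))
    · rintro ⟨c, hc1, hc2, hc3⟩
      have hcple : c ≤ p + 1 := by
        by_contra hcc
        have h1 : B c = 0 := hB0 c (by omega)
        have h2 := hc3 c (by omega) le_rfl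
        rcases Nat.lt_or_ge (p+2) c with h | h
        · rw [h1, hB0 (c-1) (by omega)] at hc2
          omega
        · have : c = p + 2 := by omega
          rw [this, psB_after (p+2) le_rfl] at h2
          rw [Nat.odd_iff] at h2; rw [Nat.even_iff] at hDA
          rcases hke with ⟨y, hy⟩
          omega
      rcases Nat.lt_or_ge c (p-1) with hc4 | hc4
      · have hchAc : chain A c := by
          apply chain_corner
          · rw [← psAB c (by omega)]
            exact hc3 c (by omega) le_rfl
          · rw [hAB c (by omega), hAB (c-1) (by omega)]
            exact hc2
        exact chain_left_iter hc1 hchAc (fun m hm1 hm2 => by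
          rw [← psAB m (by omega)]; exact hc3 m hm1 (by omega))
      · -- c ∈ {p-1, p, p+1} : A has corner at p-1
        have hchApm : chain A (p-1) := by
          apply chain_corner
          · rw [← psAB (p-1) le_rfl]
            exact hc3 (p-1) (by omega) (by omega)
          · rw [show p-1-1 = p-2 by omega]
            exact hcorApm hp2
        exact chain_left_iter (by omega) hchApm (fun m hm1 hm2 => by
          rw [← psAB m (by omega)]; exact hc3 m hm1 (by omega))
  have ddeq : ∀ n, n ≤ p - 1 → dd B n = dd A n := fun n hn => dd_congr (CT n hn).symm
  refine ⟨?_, ?_, ?_, ?_⟩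
  · intro n hn
    have e1 := nu_eq (X := B) n
    have e2 := nu_eq (X := A) n
    rcases Nat.lt_or_ge n (p-1) with h | h
    · rw [hAB n h] at e2
      rw [ddeq n (by omega)] at e1
      rcases Nat.lt_or_ge (n+1) p with h2 | h2
      · rw [ddeq (n+1) (by omega)] at e1
        omega
      · -- n + 1 = p, n = p - 1 contradiction with h
        omega
    · -- n = p - 1
      have hne : n = p - 1 := by omega
      subst hne
      rw [hBpm, ddeq (p-1) le_rfl] at e1
      rw [show p-1+1 = p by omega] at e1 e2
      rw [ddBp] at e1
      rw [ddA_after p le_rfl] at e2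
      omega
  · have e1 := nu_eq (X := B) p
    rw [hBp, ddBp, ddBp1] at e1
    omega
  · have e1 := nu_eq (X := B) (p+1)
    rw [hBp1, ddBp1, show p+1+1 = p+2 by omega, ddB_after (p+2) le_rfl] at e1
    omega
  · intro n hn
    have e1 := nu_eq (X := B) (n+2)
    have e2 := nu_eq (X := A) n
    rw [hB0 (n+2) (by omega), ddB_after (n+2) (by omega),
      show n+2+1 = n+3 by omega, ddB_after (n+3) (by omega)] at e1
    rw [hA0 n hn, ddA_after n hn, ddA_after (n+1) (by omega)] at e2
    omega

end Chunk8
end W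

namespace W
section Chunk9
variable {μ : ℕ → ℕ} {m k N : ℕ}

theorem part3 (hμa : Antitone μ) (hμN : ∀ j, N ≤ j → μ j = 0)
    (hμsum : ps μ N = 2*m+1)
    (hstep : μ k + 2 ≤ μ (k-1)) (hk : 0 < k) (hke : Even k) :
    ∀ σ τ : ℕ → ℕ,
      IsCCollapse (2*(m-k)) (minusOne (ptrans (stripTwo μ k))) σ →
      IsCCollapse (2*m) (minusOne (ptrans μ)) τ →
      IsUnionOf τ σ (twoParts k) := by
  intro σ τ hσ hτ
  set q := μ k with hq
  have hkN : k ≤ N := by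
    by_contra h
    have := hμN (k-1) (by omega)
    omega
  have hμ0 : 3 ≤ μ 0 := mu0_ge3 hμa hμN hμsum hstep hk
  have hkm : k ≤ m := k_le_m hμa hμN hμsum hstep hk
  have hq2 : q + 2 ≤ μ 0 := le_trans hstep (hμa (by omega))
  -- ν and its transpose
  set ν := stripTwo μ k with hν
  have hνa : Antitone ν := strip_antitone hμa hstep hk
  have hνN : ∀ j, N ≤ j → ν j = 0 := strip_supp hμN
  have hνsum : ps ν N = 2*(m-k)+1 := by
    have h := ps_strip hμa hstep hk (M := N) hkN
    rw [← hν] at h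
    omega
  have hν0 : ν 0 = μ 0 - 2 := by
    show stripTwo μ k 0 = μ 0 - 2
    unfold stripTwo
    rw [if_pos hk]
  -- transposes
  set Pμ := ptrans μ with hPμ
  set Pν := ptrans ν with hPν
  have hPμa : Antitone Pμ := ptrans_antitone hμa hμN
  have hPνa : Antitone Pν := ptrans_antitone hνa hνN
  have hPμN : ∀ c, μ 0 ≤ c → Pμ c = 0 := fun c hc => ptrans_supp hμa hμN hc
  have hPνN : ∀ c, μ 0 - 2 ≤ c → Pν c = 0 := fun c hc =>
    ptrans_supp hνa hνN (by omega)
  have hPμtot : ps Pμ (μ 0) = 2*m+1 := by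
    rw [ps_ptrans_total hμa hμN (le_refl (μ 0))]
    exact hμsum
  have hPνtot : ps Pν (μ 0 - 2) = 2*(m-k)+1 := by
    rw [← hν0, ps_ptrans_total hνa hνN (le_refl (ν 0))]
    exact hνsum
  have hPμ2 : ptrans Pμ 0 = μ 0 := ptrans_ptrans hμa hμN 0
  have hPν2 : ptrans Pν 0 = ν 0 := ptrans_ptrans hνa hνN 0
  -- A and B
  set B := minusOne Pμ with hBdef
  set A := minusOne Pν with hAdef
  have hBeq : ∀ j, B j = if j + 1 = μ 0 then Pμ j - 1 else Pμ j := by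
    intro j
    rw [hBdef, minusOne_eq hPμa hPμN j, hPμ2]
  have hAeq : ∀ j, A j = if j + 1 = μ 0 - 2 then Pν j - 1 else Pν j := by
    intro j
    rw [hAdef, minusOne_eq hPνa hPνN j, hPν2, hν0]
  have hBa : Antitone B := minusOne_antitone hPμa hPμN
  have hAa : Antitone A := minusOne_antitone hPνa hPνN
  have hBN : ∀ j, μ 0 ≤ j → B j = 0 := minusOne_supp hPμN
  have hAN : ∀ j, μ 0 - 2 ≤ j → A j = 0 := minusOne_supp hPνN
  have hBsum : ps B (μ 0) = 2*m := by
    have h := minusOne_ps hPμa hPμN (by omega : 1 ≤ ptrans Pμ 0) (n := μ 0) (by omega)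
    rw [← hBdef] at h
    omega
  have hAsum : ps A (μ 0 - 2) = 2*(m-k) := by
    have h := minusOne_ps hPνa hPνN (by rw [hPν2]; omega)
      (n := μ 0 - 2) (by rw [hPν2, hν0]) 
    rw [← hAdef] at h
    omega
  have hDA : Even (ps A (μ 0 - 2)) := by rw [hAsum]; exact ⟨m - k, by ring⟩
  have hDB : Even (ps B (μ 0)) := by rw [hBsum]; exact ⟨m, by ring⟩
  -- transpose values
  have hT3a : Pμ q = k := T3a hμa hμN hstep hk
  have hT3b : Pμ (q+1) = k := T3b hμa hμN hstep hk
  have hT4 : ∀ c, c < q → k + 1 ≤ Pμ c := T4 hμa hμN hstep hk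
  have hT1 : ∀ c, c + 1 ≤ q → Pν c = Pμ c := T1 hμa hμN hstep hk
  have hT2 : ∀ c, q ≤ c → Pν c = Pμ (c+2) := T2 hμa hμN hstep hk
  -- key: insert description of nuX B relative to nuX A at position q
  have KEY : (∀ n, n < q → nuX B n = nuX A n) ∧ nuX B q = k ∧ nuX B (q+1) = k ∧
      (∀ n, q ≤ n → nuX B (n+2) = nuX A n) := by
    rcases Nat.lt_or_ge (q+2) (μ 0) with hcase | hcase
    · -- CASE 1 : μ 0 ≥ q + 3
      have hAval : ∀ j, j < q → A j = Pμ j := by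
        intro j hj
        rw [hAeq j, if_neg (by omega), hT1 j (by omega)]
      apply ML1 (A := A) (B := B) (NA := μ 0 - 2) (p := q) hAa hAN hDA hk hke
      · intro j hj
        rw [hAval j hj]
        exact hT4 j hj
      · rw [hAeq q]
        have h2 : Pν q = Pμ (q+2) := hT2 q le_rfl
        have h3 : Pμ (q+2) ≤ Pμ (q+1) := hPμa (by omega)
        split <;> omega
      · intro j
        rcases Nat.lt_trichotomy j q with h | h | h
        · rw [if_pos h, hBeq j, if_neg (by omega), hAval j h]
        · rw [if_neg (by omega), if_pos (by omega), hBeq j, if_neg (by omega), h, hT3a]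
        · rcases Nat.lt_or_ge j (q+2) with h2 | h2
          · rw [if_neg (by omega), if_pos h2, hBeq j, if_neg (by omega),
              show j = q + 1 by omega, hT3b]
          · rw [if_neg (by omega), if_neg (by omega), hBeq j, hAeq (j-2),
              hT2 (j-2) (by omega), show j - 2 + 2 = j by omega]
            by_cases h2 : j + 1 = μ 0
            · rw [if_pos h2, if_pos (by omega)]
            · rw [if_neg h2, if_neg (by omega)]
    · -- CASE 2 : μ 0 = q + 2
      have hμ0e : μ 0 = q + 2 := by omega
      have hq1 : 1 ≤ q := by omega
      have hk2 : 2 ≤ k := by rcases hke with ⟨y, hy⟩; omega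
      apply ML2 (A := A) (B := B) (p := q) hBa (by omega) hk2 hke
      · intro j hj
        rw [hAeq j, if_neg (by omega), hBeq j, if_neg (by omega), hT1 j (by omega)]
      · rw [hBeq (q-1), if_neg (by omega), hAeq (q-1), if_pos (by omega),
          hT1 (q-1) (by omega)]
        have := hT4 (q-1) (by omega)
        omega
      · intro j hj
        rw [hAeq j]
        have h2 : Pν j = Pμ (j+2) := hT2 j hj
        have h3 : Pμ (j+2) = 0 := hPμN (j+2) (by omega)
        split <;> omega
      · rw [hBeq q, if_neg (by omega), hT3a]
      · rw [hBeq (q+1), if_pos (by omega), hT3b]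
      · intro j hj
        rw [hBeq j]
        have h3 : Pμ j = 0 := hPμN j (by omega)
        split <;> omega
      · -- Even (ps A q) : note q = μ 0 - 2
        rw [show q = μ 0 - 2 by omega]
        exact hDA
  -- collapses are unique
  have hcolA : IsCCollapse (2*(m-k)) A (nuX A) := by
    have := nuX_isCCollapse hAa hAN hDA
    rw [hAsum] at this
    exact this
  have hcolB : IsCCollapse (2*m) B (nuX B) := by
    have := nuX_isCCollapse hBa hBN hDB
    rw [hBsum] at this
    exact this
  have hσeq : σ = nuX A := collapse_unique hσ hcolA
  have hτeq : τ = nuX B := collapse_unique hτ hcolB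
  rw [hσeq, hτeq]
  exact union_of_insert (Nv := μ 0 - 2) (Nu := μ 0)
    (nuX_antitone hAa hAN hDA) (nuX_supp hAN hDA)
    (nuX_antitone hBa hBN hDB) (nuX_supp hBN hDB)
    KEY.1 KEY.2.1 KEY.2.2.1 KEY.2.2.2 hk

end Chunk9
end W


/-- `μ` orthogonal partition of `2m+1`, `k > 0` even with
`μ_k ≥ μ_{k+1}+2` (1-based).  Let `ν` be `μ` with the first `k` parts decreased by 2.
Then `ν` is an orthogonal partition of `2(m−k)+1`; if `μ` is special so is `ν`; and if
`σ, τ` are C-collapses of `(νᵗ)⁻, (μᵗ)⁻` then `τ = σ ∪ (k,k)`. -/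
theorem stmt12 (m k : ℕ) (μ : ℕ → ℕ) (hk : 0 < k) (hke : Even k)
    (hμ : IsPartitionOf μ (2*m+1)) (hμo : IsOrthogonal μ)
    (hstep : μ k + 2 ≤ μ (k-1)) :
    (IsPartitionOf (stripTwo μ k) (2*(m-k)+1) ∧ IsOrthogonal (stripTwo μ k)) ∧
    (IsOrthogonal (ptrans μ) → IsOrthogonal (ptrans (stripTwo μ k))) ∧
    ∀ σ τ : ℕ → ℕ,
      IsCCollapse (2*(m-k)) (minusOne (ptrans (stripTwo μ k))) σ →
      IsCCollapse (2*m) (minusOne (ptrans μ)) τ →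
      IsUnionOf τ σ (twoParts k) := by
  obtain ⟨hμa, N, hμN, hsum⟩ := hμ
  have hμsum : W.ps μ N = 2*m+1 := hsum
  refine ⟨W.part1 hμa hμN hμsum hμo hstep hk hke, ?_, ?_⟩
  · intro hto
    exact W.part2 hμa hμN hstep hk hke hto
  · exact W.part3 hμa hμN hμsum hstep hk hke
end

section
/- Let λ_1, λ_2 be special orthogonal partitions of odd numbers d_1, d_2, set d = d_1+d_2−1, and assume every nonzero entry of λ_1^t and of λ_2^t is odd. Let k be the largest index with λ_{1,k}+λ_{2,k} > 0, set a_i = λ_{i,k}, let l_i be the largest j ≥ 1 with λ_{i,k−j+1} = λ_{i,k}, and l = min(l_1,l_2); assume l is even. Let λ_i' = (λ_{i,1},…,λ_{i,k−l}) and set δ = 1 if a_1 and a_2 are both odd, and δ = 0 otherwise. Let ξ be the sequence formed from (λ_1,λ_2) with data (ε_1,ε_2,d) = (1,1,d) and ξ' the sequence formed from (λ_1',λ_2') with data (1,1,d') for any d' ≡ d (mod 2). Then ξ_{k−l+1} = δ, ξ_k = −δ, ξ'_{k−l+1} = ξ'_k = 0, and ξ'_j = ξ_j for every j ∉ {k−l+1,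 k}. -/
/-- Truncate `f` to its first `m` entries. -/
def truncTo (f : ℕ → ℕ) (m : ℕ) : ℕ → ℕ := fun j => if j < m then f j else 0

lemma xi_zero_of_not_odd_left (f g : ℕ → ℕ) (e2 d j : ℕ) (h : f j % 2 ≠ 1) :
    xiSeq f g 1 e2 d j = 0 := by
  unfold xiSeq
  rw [if_neg (by rintro ⟨-, h1, -⟩; exact h h1), if_neg (by rintro ⟨-, h1, -⟩; exact h h1)]

lemma xi_zero_of_nodrop (f g : ℕ → ℕ) (e1 e2 d j : ℕ) (h0 : j ≠ 0)
    (h1 : ¬(f j + g j < f (j-1) + g (j-1))) (h2 : ¬(f (j+1) + g (j+1) < f j + g j)) :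
    xiSeq f g e1 e2 d j = 0 := by
  unfold xiSeq
  rw [if_neg (by rintro ⟨-, -, -, h⟩; rcases h with h | h; exacts [h0 h, h1 h]),
    if_neg (by rintro ⟨-, -, -, h⟩; exact h2 h)]

lemma ptrans_zero_eq (f : ℕ → ℕ) (hf : Antitone f) (n : ℕ) (h0 : f n = 0)
    (hpos : ∀ m, m < n → f m ≠ 0) : ptrans f 0 = n := by
  have hset : {j : ℕ | 0 + 1 ≤ f j} = ↑(Finset.range n) := by
    ext j
    simp only [Set.mem_setOf_eq, Finset.coe_range, Set.mem_Iio]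
    constructor
    · intro h
      by_contra hc
      push_neg at hc
      have := hf hc
      omega
    · intro h
      have := hpos j h
      omega
  unfold ptrans
  have h1 : Nat.card {j : ℕ // 0 + 1 ≤ f j} = Nat.card ↥(↑(Finset.range n) : Set ℕ) :=
    Nat.card_congr (Equiv.setCongr hset)
  rw [h1, Nat.card_coe_set_eq, Set.ncard_coe_finset, Finset.card_range]

/-- type B stripping of the bottom rectangle.
`λ₁, λ₂` special orthogonal partitions of odd `d₁, d₂` whose transposes have all
nonzero entries odd; `k` the largest (1-based) index with `λ_{1,k}+λ_{2,k} > 0`;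
`aᵢ = λ_{i,k}`; `lᵢ` the largest `j ≥ 1` with `λ_{i,k−j+1} = λ_{i,k}`;
`l = min(l₁,l₂)` even; `λᵢ' = (λ_{i,1},…,λ_{i,k−l})`;
`δ = 1` iff `a₁, a₂` both odd.  With `ξ` formed from `(λ₁,λ₂)` with data `(1,1,d)`,
`d = d₁+d₂−1`, and `ξ'` formed from `(λ₁',λ₂')` with data `(1,1,d')`, `d' ≡ d (mod 2)`:
`ξ_{k−l+1} = δ`, `ξ_k = −δ`, `ξ'_{k−l+1} = ξ'_k = 0`, and `ξ'_j = ξ_j` for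
`j ∉ {k−l+1, k}`.  (0-based: positions `k−l` and `k−1`.) -/
theorem stmt16 (d1 d2 k l1 l2 : ℕ) (hd1 : Odd d1) (hd2 : Odd d2)
    (lam1 lam2 : ℕ → ℕ)
    (h1 : IsPartitionOf lam1 d1) (h1o : IsOrthogonal lam1)
    (h1s : IsOrthogonal (ptrans lam1))
    (h2 : IsPartitionOf lam2 d2) (h2o : IsOrthogonal lam2)
    (h2s : IsOrthogonal (ptrans lam2))
    (ht1 : ∀ j, ptrans lam1 j ≠ 0 → Odd (ptrans lam1 j))
    (ht2 : ∀ j, ptrans lam2 j ≠ 0 → Odd (ptrans lam2 j))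
    (hk1 : 1 ≤ k) (hkpos : 0 < lam1 (k-1) + lam2 (k-1))
    (hkmax : lam1 k + lam2 k = 0)
    (hl1a : 1 ≤ l1) (hl1b : l1 ≤ k) (hl1c : lam1 (k - l1) = lam1 (k-1))
    (hl1d : l1 = k ∨ lam1 (k - l1 - 1) ≠ lam1 (k-1))
    (hl2a : 1 ≤ l2) (hl2b : l2 ≤ k) (hl2c : lam2 (k - l2) = lam2 (k-1))
    (hl2d : l2 = k ∨ lam2 (k - l2 - 1) ≠ lam2 (k-1))
    (hleven : Even (min l1 l2)) :
    xiSeq lam1 lam2 1 1 (d1 + d2 - 1) (k - min l1 l2)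
        = (if Odd (lam1 (k-1)) ∧ Odd (lam2 (k-1)) then 1 else 0) ∧
    xiSeq lam1 lam2 1 1 (d1 + d2 - 1) (k - 1)
        = -(if Odd (lam1 (k-1)) ∧ Odd (lam2 (k-1)) then 1 else 0) ∧
    ∀ d' : ℕ, d' % 2 = (d1 + d2 - 1) % 2 →
      xiSeq (truncTo lam1 (k - min l1 l2)) (truncTo lam2 (k - min l1 l2)) 1 1 d'
          (k - min l1 l2) = 0 ∧
      xiSeq (truncTo lam1 (k - min l1 l2)) (truncTo lam2 (k - min l1 l2)) 1 1 d'
          (k - 1) = 0 ∧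
      ∀ j, j ≠ k - min l1 l2 → j ≠ k - 1 →
        xiSeq (truncTo lam1 (k - min l1 l2)) (truncTo lam2 (k - min l1 l2)) 1 1 d' j
          = xiSeq lam1 lam2 1 1 (d1 + d2 - 1) j := by

  obtain ⟨hA1, -⟩ := h1
  obtain ⟨hA2, -⟩ := h2
  set D := d1 + d2 - 1 with hD
  set l := min l1 l2 with hl
  set p := k - l with hp
  have hll1 : l ≤ l1 := min_le_left _ _
  have hll2 : l ≤ l2 := min_le_right _ _
  have hlk : l ≤ k := le_trans hll1 hl1b
  have hz1 : lam1 k = 0 := by omega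
  have hz2 : lam2 k = 0 := by omega
  have hzero1 : ∀ j, k ≤ j → lam1 j = 0 := fun j hj => by have := hA1 hj; omega
  have hzero2 : ∀ j, k ≤ j → lam2 j = 0 := fun j hj => by have := hA2 hj; omega
  -- k is odd
  have hex1 : ∃ n, lam1 n = 0 := ⟨k, hz1⟩
  have hex2 : ∃ n, lam2 n = 0 := ⟨k, hz2⟩
  have hn1 : ptrans lam1 0 = Nat.find hex1 :=
    ptrans_zero_eq _ hA1 _ (Nat.find_spec hex1) (fun m hm => Nat.find_min hex1 hm)
  have hn2 : ptrans lam2 0 = Nat.find hex2 :=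
    ptrans_zero_eq _ hA2 _ (Nat.find_spec hex2) (fun m hm => Nat.find_min hex2 hm)
  have hn1k : Nat.find hex1 ≤ k := Nat.find_le hz1
  have hn2k : Nat.find hex2 ≤ k := Nat.find_le hz2
  have hkodd : k % 2 = 1 := by
    have hor : lam1 (k-1) ≠ 0 ∨ lam2 (k-1) ≠ 0 := by omega
    have hkn : Nat.find hex1 = k ∨ Nat.find hex2 = k := by
      rcases hor with h | h
      · left
        have hlt : k - 1 < Nat.find hex1 := by
          by_contra hc
          push_neg at hc
          have h2' := hA1 hc
          rw [Nat.find_spec hex1] at h2'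
          omega
        omega
      · right
        have hlt : k - 1 < Nat.find hex2 := by
          by_contra hc
          push_neg at hc
          have h2' := hA2 hc
          rw [Nat.find_spec hex2] at h2'
          omega
        omega
    rcases hkn with h | h
    · have ho := ht1 0 (by rw [hn1, h]; omega)
      rw [hn1, h] at ho
      exact Nat.odd_iff.mp ho
    · have ho := ht2 0 (by rw [hn2, h]; omega)
      rw [hn2, h] at ho
      exact Nat.odd_iff.mp ho
  have hlev : l % 2 = 0 := Nat.even_iff.mp hleven
  have hl2' : 2 ≤ l := by omega
  have hpodd : p % 2 = 1 := by omega
  have hppos : 0 < p := by omega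
  have hDodd : D % 2 = 1 := by
    have o1 := Nat.odd_iff.mp hd1
    have o2 := Nat.odd_iff.mp hd2
    omega
  -- constancy on the bottom rectangle
  have hc1 : ∀ j, k - l1 ≤ j → j ≤ k - 1 → lam1 j = lam1 (k-1) := by
    intro j hj1 hj2
    have ha := hA1 hj1
    have hb := hA1 hj2
    rw [hl1c] at ha
    omega
  have hc2 : ∀ j, k - l2 ≤ j → j ≤ k - 1 → lam2 j = lam2 (k-1) := by
    intro j hj1 hj2
    have ha := hA2 hj1
    have hb := hA2 hj2
    rw [hl2c] at ha
    omega
  have ha1p : lam1 p = lam1 (k-1) := hc1 p (by omega) (by omega)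
  have ha2p : lam2 p = lam2 (k-1) := hc2 p (by omega) (by omega)
  -- strict drop just above the rectangle
  have hdrop : lam1 p + lam2 p < lam1 (p-1) + lam2 (p-1) := by
    have hm1 := hA1 (show p - 1 ≤ p by omega)
    have hm2 := hA2 (show p - 1 ≤ p by omega)
    rcases le_total l1 l2 with hcase | hcase
    · have hle : l = l1 := by omega
      rcases hl1d with hk' | hne
      · omega
      · have he : k - l1 - 1 = p - 1 := by omega
        rw [he] at hne
        omega
    · have hle : l = l2 := by omega
      rcases hl2d with hk' | hne
      · omega
      · have he : k - l2 - 1 = p - 1 := by omega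
        rw [he] at hne
        omega
  have hq1 : (k - 1) + 1 = k := by omega
  refine ⟨?_, ?_, ?_⟩
  · -- ξ at position p = k - l
    by_cases hdel : Odd (lam1 (k-1)) ∧ Odd (lam2 (k-1))
    · rw [if_pos hdel]
      have o1 := Nat.odd_iff.mp hdel.1
      have o2 := Nat.odd_iff.mp hdel.2
      unfold xiSeq
      split_ifs with hA hB
      · rfl
      · exact absurd ⟨by omega, by omega, by omega, Or.inr hdrop⟩ hA
      · exact absurd ⟨by omega, by omega, by omega, Or.inr hdrop⟩ hA
    · rw [if_neg hdel]
      unfold xiSeq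
      split_ifs with hA hB
      · exfalso
        obtain ⟨-, hb, hc', -⟩ := hA
        refine hdel ⟨Nat.odd_iff.mpr ?_, Nat.odd_iff.mpr ?_⟩ <;> omega
      · exfalso
        obtain ⟨hpar, -⟩ := hB
        omega
      · rfl
  · -- ξ at position k - 1
    by_cases hdel : Odd (lam1 (k-1)) ∧ Odd (lam2 (k-1))
    · rw [if_pos hdel]
      have o1 := Nat.odd_iff.mp hdel.1
      have o2 := Nat.odd_iff.mp hdel.2
      have hzz1 : lam1 (k - 1 + 1) = 0 := by rw [hq1]; exact hz1
      have hzz2 : lam2 (k - 1 + 1) = 0 := by rw [hq1]; exact hz2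
      unfold xiSeq
      split_ifs with hA hB
      · exfalso
        obtain ⟨hpar, -⟩ := hA
        omega
      · rfl
      · exact absurd ⟨by omega, o1, o2, by omega⟩ hB
    · rw [if_neg hdel, neg_zero]
      unfold xiSeq
      split_ifs with hA hB
      · exfalso
        obtain ⟨hpar, -⟩ := hA
        omega
      · exfalso
        obtain ⟨-, hb, hc', -⟩ := hB
        exact hdel ⟨Nat.odd_iff.mpr hb, Nat.odd_iff.mpr hc'⟩
      · rfl
  · intro d' hd'
    have htr : ∀ (f : ℕ → ℕ) (x : ℕ), x < p → truncTo f p x = f x := fun f x hx => if_pos hx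
    have htr0 : ∀ (f : ℕ → ℕ) (x : ℕ), p ≤ x → truncTo f p x = 0 :=
      fun f x hx => if_neg (by omega)
    refine ⟨?_, ?_, ?_⟩
    · exact xi_zero_of_not_odd_left _ _ _ _ _ (by rw [htr0 lam1 p le_rfl]; omega)
    · exact xi_zero_of_not_odd_left _ _ _ _ _ (by rw [htr0 lam1 (k-1) (by omega)]; omega)
    · intro j hjp hjq
      by_cases hcase : j < p
      · by_cases hcase2 : j + 1 < p
        · unfold xiSeq
          rw [htr lam1 j hcase, htr lam2 j hcase, htr lam1 (j-1) (by omega),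
            htr lam2 (j-1) (by omega), htr lam1 (j+1) hcase2, htr lam2 (j+1) hcase2,
            show (d' + 1) % 2 = (D + 1) % 2 by omega, hd']
        · have hj1 : j + 1 = p := by omega
          have hd2' : lam1 p + lam2 p < lam1 j + lam2 j := by
            have hh := hdrop
            rw [show p - 1 = j from by omega] at hh
            exact hh
          unfold xiSeq
          rw [htr lam1 j hcase, htr lam2 j hcase, htr lam1 (j-1) (by omega),
            htr lam2 (j-1) (by omega), htr0 lam1 (j+1) (by omega), htr0 lam2 (j+1) (by omega),
            show (d' + 1) % 2 = (D + 1) % 2 by omega, hd']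
          refine if_congr Iff.rfl rfl (if_congr ?_ rfl rfl)
          constructor
          · rintro ⟨a, b, c, -⟩
            exact ⟨a, b, c, by rw [hj1]; exact hd2'⟩
          · rintro ⟨a, b, c, -⟩
            exact ⟨a, b, c, by omega⟩
      · by_cases hck : k ≤ j
        · rw [xi_zero_of_not_odd_left _ _ _ _ _ (by rw [htr0 lam1 j (by omega)]; omega),
            xi_zero_of_not_odd_left _ _ _ _ _ (by have := hzero1 j hck; omega)]
        · have hpj : p < j := by omega
          have hjk : j < k - 1 := by omega
          have e1 : xiSeq (truncTo lam1 p) (truncTo lam2 p) 1 1 d' j = 0 :=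
            xi_zero_of_not_odd_left _ _ _ _ _ (by rw [htr0 lam1 j (by omega)]; omega)
          have e2 : xiSeq lam1 lam2 1 1 D j = 0 := by
            apply xi_zero_of_nodrop _ _ _ _ _ _ (by omega)
            · have ea := hc1 (j-1) (by omega) (by omega)
              have eb := hc1 j (by omega) (by omega)
              have ec := hc2 (j-1) (by omega) (by omega)
              have ed := hc2 j (by omega) (by omega)
              omega
            · have ea := hc1 (j+1) (by omega) (by omega)
              have eb := hc1 j (by omega) (by omega)
              have ec := hc2 (j+1) (by omega) (by omega)
              have ed := hc2 j (by omega) (by omega)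
              omega
          rw [e1, e2]
end

section
/- Let λ_1 be a special symplectic partition of the even number d_1 and λ_2 a special orthogonal partition of the even number d_2, set d = d_1+d_2, and assume every nonzero entry of λ_1^t and of λ_2^t is even. Let k be the largest index with λ_{1,k}+λ_{2,k} > 0, set a_i = λ_{i,1}, let l_i be the largest j ≥ 1 with λ_{i,j} = λ_{i,1}, and l = min(l_1,l_2); assume l is even. Let λ_i' = (λ_{i,l+1},…,λ_{i,k}) and set δ = 1 if a_1 is even and a_2 is odd, and δ = 0 otherwise. Let ξ be the sequence formed from (λ_1,λ_2) with data (ε_1,ε_2,d) = (0,1,d) and ξ' the sequence formed from (λ_1',λ_2') with data (0,1,d') for any d' ≡ d (mod 2). Then ξ_1 = δ, ξ_l = −δ, ξ_j = 0 for 1 < j < l, and ξ'_j = ξ_{j+l} for every j ≥ 1. -/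
/-- Drop the first `l` entries of `f` (shift left by `l`). -/
def shiftBy (f : ℕ → ℕ) (l : ℕ) : ℕ → ℕ := fun j => f (j + l)

/-- type C stripping of the top rectangle.
`λ₁` special symplectic of even `d₁`, `λ₂` special orthogonal of even `d₂`, transposes
with all nonzero entries even; `k` the largest (1-based) index with
`λ_{1,k}+λ_{2,k} > 0`; `aᵢ = λ_{i,1}`; `lᵢ` the largest `j ≥ 1` with
`λ_{i,j} = λ_{i,1}`; `l = min(l₁,l₂)` even; `λᵢ' = (λ_{i,l+1},…,λ_{i,k})`;
`δ = 1` iff `a₁` even and `a₂` odd.  With `ξ` formed from `(λ₁,λ₂)` with data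
`(0,1,d)`, `d = d₁+d₂`, and `ξ'` formed from `(λ₁',λ₂')` with data `(0,1,d')`,
`d' ≡ d (mod 2)`: `ξ₁ = δ`, `ξ_l = −δ`, `ξ_j = 0` for `1 < j < l`, and
`ξ'_j = ξ_{j+l}` for all `j ≥ 1`.  (0-based: positions `0` and `l−1`.) -/
theorem stmt17 (d1 d2 k l1 l2 : ℕ) (hd1 : Even d1) (hd2 : Even d2)
    (lam1 lam2 : ℕ → ℕ)
    (h1 : IsPartitionOf lam1 d1) (h1sp : IsSymplectic lam1)
    (h1s : IsSymplectic (ptrans lam1))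
    (h2 : IsPartitionOf lam2 d2) (h2o : IsOrthogonal lam2)
    (h2s : IsSymplectic (ptrans lam2))
    (ht1 : ∀ j, ptrans lam1 j ≠ 0 → Even (ptrans lam1 j))
    (ht2 : ∀ j, ptrans lam2 j ≠ 0 → Even (ptrans lam2 j))
    (hk1 : 1 ≤ k) (hkpos : 0 < lam1 (k-1) + lam2 (k-1))
    (hkmax : lam1 k + lam2 k = 0)
    (hl1a : 1 ≤ l1) (hl1b : lam1 (l1 - 1) = lam1 0) (hl1c : lam1 l1 ≠ lam1 0)
    (hl2a : 1 ≤ l2) (hl2b : lam2 (l2 - 1) = lam2 0) (hl2c : lam2 l2 ≠ lam2 0)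
    (hleven : Even (min l1 l2)) :
    xiSeq lam1 lam2 0 1 (d1 + d2) 0
        = (if Even (lam1 0) ∧ Odd (lam2 0) then 1 else 0) ∧
    xiSeq lam1 lam2 0 1 (d1 + d2) (min l1 l2 - 1)
        = -(if Even (lam1 0) ∧ Odd (lam2 0) then 1 else 0) ∧
    (∀ j, 0 < j → j + 1 < min l1 l2 → xiSeq lam1 lam2 0 1 (d1 + d2) j = 0) ∧
    ∀ d' : ℕ, d' % 2 = (d1 + d2) % 2 →
      ∀ j, xiSeq (shiftBy lam1 (min l1 l2)) (shiftBy lam2 (min l1 l2)) 0 1 d' j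
          = xiSeq lam1 lam2 0 1 (d1 + d2) (j + min l1 l2) := by
  obtain ⟨ha1, -⟩ := h1
  obtain ⟨ha2, -⟩ := h2
  have hdpar : (d1 + d2) % 2 = 0 := by
    obtain ⟨a, ha⟩ := hd1; obtain ⟨b, hb⟩ := hd2; omega
  set L := min l1 l2 with hLdef
  have hL1 : 1 ≤ L := le_min hl1a hl2a
  have hL0 : L % 2 = 0 := by obtain ⟨m, hm⟩ := hleven; omega
  have hL2 : 2 ≤ L := by omega
  have hc1 : ∀ j, j < l1 → lam1 j = lam1 0 := by
    intro j hj
    have e1 := ha1 (Nat.zero_le j)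
    have e2 := ha1 (show j ≤ l1 - 1 by omega)
    omega
  have hc2 : ∀ j, j < l2 → lam2 j = lam2 0 := by
    intro j hj
    have e1 := ha2 (Nat.zero_le j)
    have e2 := ha2 (show j ≤ l2 - 1 by omega)
    omega
  have hlt1 : lam1 l1 < lam1 0 := lt_of_le_of_ne (ha1 (Nat.zero_le l1)) hl1c
  have hlt2 : lam2 l2 < lam2 0 := lt_of_le_of_ne (ha2 (Nat.zero_le l2)) hl2c
  have eL1 : lam1 (L - 1) = lam1 0 := hc1 _ (by omega)
  have eL2 : lam2 (L - 1) = lam2 0 := hc2 _ (by omega)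
  have hdrop : lam1 L + lam2 L < lam1 (L - 1) + lam2 (L - 1) := by
    rcases le_total l1 l2 with h | h
    · have hLe : L = l1 := min_eq_left h
      have q1 : lam1 L = lam1 l1 := by rw [hLe]
      have q2 : lam2 L ≤ lam2 0 := ha2 (Nat.zero_le L)
      omega
    · have hLe : L = l2 := min_eq_right h
      have q1 : lam2 L = lam2 l2 := by rw [hLe]
      have q2 : lam1 L ≤ lam1 0 := ha1 (Nat.zero_le L)
      omega
  refine ⟨?_, ?_, ?_, ?_⟩
  · simp only [xiSeq, Nat.even_iff, Nat.odd_iff, eq_self_iff_true, true_or, or_true,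
      and_true, true_and]
    split_ifs <;> omega
  · simp only [xiSeq, Nat.even_iff, Nat.odd_iff,
      show L - 1 + 1 = L from by omega]
    split_ifs <;> omega
  · intro j hj0 hjL
    have e1 : lam1 j = lam1 0 := hc1 _ (by omega)
    have e2 : lam2 j = lam2 0 := hc2 _ (by omega)
    have e3 : lam1 (j - 1) = lam1 0 := hc1 _ (by omega)
    have e4 : lam2 (j - 1) = lam2 0 := hc2 _ (by omega)
    have e5 : lam1 (j + 1) = lam1 0 := hc1 _ (by omega)
    have e6 : lam2 (j + 1) = lam2 0 := hc2 _ (by omega)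
    simp only [xiSeq]
    split_ifs <;> omega
  · intro d' hd' j
    rcases Nat.eq_zero_or_pos j with rfl | hj
    · simp only [xiSeq, shiftBy, Nat.zero_sub, Nat.zero_add, zero_add, eq_self_iff_true,
        true_or, or_true, and_true, true_and, show 1 + L = L + 1 from by omega]
      split_ifs <;> omega
    · simp only [xiSeq, shiftBy,
        show j - 1 + L = j + L - 1 from by omega,
        show j + 1 + L = j + L + 1 from by omega]
      split_ifs <;> omega
end
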